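/- arXiv:2111.01854 — 4 statements merged into one kernel-verified Lean document; each statement's English description precedes it below -/
import Mathlib

section
/- (Light-cone form of the Lieb-Robinson bound.) Suppose A is localized on a nonempty subset X ⊆ Λ, B is localized on a nonempty subset Y ⊆ Λ, [A,B] = 0, [h_Z, h_W] = 0 for all disjoint Z, W ⊆ Λ, and dist(X,Y) > 0. Define the Lieb-Robinson velocity v_LR = 4s/μ. Then for every t ∈ ℝ with dist(X,Y) ≥ v_LR·|t|, ‖[A(t), B]‖ ≤ 2·|X|·‖A‖·‖B‖·exp(−(μ/2)·dist(X,Y)). -/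
open scoped Matrix Classical
set_option linter.unusedSectionVars false
set_option maxHeartbeats 1000000

/-- The L2 operator norm of an `n × n` complex matrix. -/
noncomputable def opNorm {n : ℕ} (A : Matrix (Fin n) (Fin n) ℂ) : ℝ :=
  ‖Matrix.toEuclideanCLM (𝕜 := ℂ) A‖

/-- Heisenberg time evolution `A(t) = e^{itH} A e^{-itH}`. -/
noncomputable def timeEvol {n : ℕ} (H A : Matrix (Fin n) (Fin n) ℂ) (t : ℝ) :
    Matrix (Fin n) (Fin n) ℂ :=
  NormedSpace.exp ((Complex.I * (t : ℂ)) • H) * A *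
    NormedSpace.exp ((-(Complex.I * (t : ℂ))) • H)

/-- `A` is localized on `X ⊆ Λ`: it commutes with every `h_Z` with `Z ∩ X = ∅`. -/
def IsLocalized {n : ℕ} {Λ : Type} [Fintype Λ] [DecidableEq Λ]
    (h : Finset Λ → Matrix (Fin n) (Fin n) ℂ)
    (A : Matrix (Fin n) (Fin n) ℂ) (X : Finset Λ) : Prop :=
  ∀ Z : Finset Λ, Z ∩ X = ∅ → A * h Z = h Z * A

/-- `dist(X,Y) = min_{i∈X, j∈Y} dist(i,j)` (as an infimum, which is a minimum for
nonempty finite sets). -/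
noncomputable def setDist {Λ : Type} [MetricSpace Λ] (X Y : Finset Λ) : ℝ :=
  sInf {d : ℝ | ∃ i ∈ X, ∃ j ∈ Y, d = dist i j}


section AbstractCstar

variable {A : Type*} [NormedRing A] [StarRing A] [CStarRing A] [NormedAlgebra ℂ A]
  [CompleteSpace A] [StarModule ℂ A] [NormOneClass A]

omit [StarRing A] [CStarRing A] [CompleteSpace A] [StarModule ℂ A] [NormOneClass A] in
lemma LR.key_smul (M : A) (z : ℂ) (u : ℝ) : (z * u) • M = u • (z • M) := by
  rw [← smul_smul, smul_comm]
  norm_num [Complex.coe_smul]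

lemma LR.real_star_smul (t : ℝ) (M : A) : star (t • M) = t • star M := by
  rw [← Complex.coe_smul, star_smul, ← Complex.coe_smul]
  simp

/-- one-parameter group -/
noncomputable def LR.U (M : A) (t : ℝ) : A := NormedSpace.exp (t • M)

namespace LR

lemma U_zero (M : A) : U M 0 = 1 := by simp [U, NormedSpace.exp_zero]

lemma U_mul_U (M : A) (t : ℝ) : U M t * U (-M) t = 1 := by
  letI : NormedAlgebra ℚ A := NormedAlgebra.restrictScalars ℚ ℂ A
  rw [U, U, smul_neg, ← NormedSpace.exp_add_of_commute ((Commute.refl (t • M)).neg_right),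
    add_neg_cancel, NormedSpace.exp_zero]

lemma U_mul_U' (M : A) (t : ℝ) : U (-M) t * U M t = 1 := by
  simpa [neg_neg] using U_mul_U (-M) t

lemma U_cancel_left (M : A) (t : ℝ) (x : A) : U (-M) t * (U M t * x) = x := by
  rw [← mul_assoc, U_mul_U', one_mul]

lemma U_cancel_left' (M : A) (t : ℝ) (x : A) : U M t * (U (-M) t * x) = x := by
  rw [← mul_assoc, U_mul_U, one_mul]

lemma star_U (M : A) (hM : star M = -M) (t : ℝ) : star (U M t) = U (-M) t := by
  rw [U, U, NormedSpace.star_exp, real_star_smul, hM]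

lemma norm_U (M : A) (hM : star M = -M) (t : ℝ) : ‖U M t‖ = 1 := by
  have h1 : ‖star (U M t) * U M t‖ = 1 := by
    rw [star_U M hM, U_mul_U', norm_one]
  rw [CStarRing.norm_star_mul_self] at h1
  nlinarith [norm_nonneg (U M t)]

lemma hasDerivAt_U (M : A) (τ : ℝ) : HasDerivAt (U M) (M * U M τ) τ := by
  have h := hasDerivAt_exp_smul_const (𝕂 := ℝ) M τ
  have h2 : NormedSpace.exp (τ • M) * M = M * NormedSpace.exp (τ • M) :=
    (((Commute.refl M).smul_right (τ : ℝ)).exp_right).symm.eq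
  rw [h2] at h
  exact h

lemma continuous_U (M : A) : Continuous (U M) :=
  continuous_iff_continuousAt.2 fun τ => (hasDerivAt_U M τ).continuousAt

lemma U_comm (M : A) (t : ℝ) : M * U M t = U M t * M :=
  (((Commute.refl M).smul_right (t : ℝ)).exp_right).eq

end LR

/-- Heisenberg conjugation in an abstract algebra -/
noncomputable def LR.Cg (M : A) (t : ℝ) (x : A) : A := LR.U M t * x * LR.U (-M) t

namespace LR

lemma Cg_zero (M : A) (x : A) : Cg M 0 x = x := by simp [Cg, U_zero]

lemma norm_Cg (M : A) (hM : star M = -M) (t : ℝ) (x : A) : ‖Cg M t x‖ = ‖x‖ := by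
  have hM' : star (-M) = -(-M) := by rw [star_neg, hM, neg_neg]
  refine le_antisymm ?_ ?_
  · calc ‖U M t * x * U (-M) t‖ ≤ ‖U M t * x‖ * ‖U (-M) t‖ := norm_mul_le _ _
    _ ≤ ‖U M t‖ * ‖x‖ * ‖U (-M) t‖ := by
        gcongr; exact norm_mul_le _ _
    _ = ‖x‖ := by rw [norm_U M hM, norm_U (-M) hM', one_mul, mul_one]
  · have hx : x = U (-M) t * (Cg M t x) * U M t := by
      rw [Cg, ← mul_assoc, ← mul_assoc, U_mul_U', one_mul, mul_assoc, U_mul_U', mul_one]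
    calc ‖x‖ = ‖U (-M) t * (Cg M t x) * U M t‖ := by rw [← hx]
    _ ≤ ‖U (-M) t * Cg M t x‖ * ‖U M t‖ := norm_mul_le _ _
    _ ≤ ‖U (-M) t‖ * ‖Cg M t x‖ * ‖U M t‖ := by gcongr; exact norm_mul_le _ _
    _ = ‖Cg M t x‖ := by rw [norm_U M hM, norm_U (-M) hM', one_mul, mul_one]

lemma Cg_smul (M : A) (t : ℝ) (z : ℂ) (x : A) : Cg M t (z • x) = z • Cg M t x := by
  simp [Cg, mul_smul_comm, smul_mul_assoc]

lemma Cg_sum {ι : Type*} (M : A) (t : ℝ) (S : Finset ι) (f : ι → A) :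
    Cg M t (∑ i ∈ S, f i) = ∑ i ∈ S, Cg M t (f i) := by
  simp [Cg, Finset.mul_sum, Finset.sum_mul]

lemma continuous_Cg (M : A) (x : A) : Continuous (fun τ => Cg M τ x) :=
  ((continuous_U M).mul continuous_const).mul (continuous_U (-M))

lemma hasDerivAt_Cg (M x : A) (τ : ℝ) :
    HasDerivAt (fun u => Cg M u x) (M * Cg M τ x - Cg M τ x * M) τ := by
  have h := ((hasDerivAt_U M τ).mul_const x).mul (hasDerivAt_U (-M) τ)
  convert h using 1
  · rfl
  have h2 : (-M) * U (-M) τ = U (-M) τ * (-M) := U_comm (-M) τ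
  rw [h2]
  simp only [Cg]
  noncomm_ring

end LR


namespace LR

lemma norm_comm_le (x y : A) : ‖x * y - y * x‖ ≤ 2 * ‖x‖ * ‖y‖ := by
  calc ‖x * y - y * x‖ ≤ ‖x * y‖ + ‖y * x‖ := norm_sub_le _ _
  _ ≤ ‖x‖ * ‖y‖ + ‖y‖ * ‖x‖ := add_le_add (norm_mul_le _ _) (norm_mul_le _ _)
  _ = 2 * ‖x‖ * ‖y‖ := by ring

lemma mul3_le {a b c : ℝ} (ha : a ≤ 1) (hc : c ≤ 1) (ha0 : 0 ≤ a) (hb0 : 0 ≤ b)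
    (hc0 : 0 ≤ c) : a * b * c ≤ b := by
  have h1 : a * b ≤ b := mul_le_of_le_one_left hb0 ha
  have h2 : a * b * c ≤ b * c := mul_le_mul_of_nonneg_right h1 hc0
  exact h2.trans (mul_le_of_le_one_right hb0 hc)

lemma U_comm_neg (M : A) (τ : ℝ) : U (-M) τ * M = M * U (-M) τ := by
  have h := U_comm (-M) τ
  simp only [neg_mul, mul_neg] at h
  exact (neg_inj.mp h).symm

lemma conj_mul_cancel (M : A) (τ : ℝ) (x y : A) :
    (U M τ * x * U (-M) τ) * (U M τ * y) = U M τ * (x * y) := by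
  rw [mul_assoc (U M τ) x (U (-M) τ), mul_assoc (U M τ) (x * U (-M) τ),
    mul_assoc x (U (-M) τ), U_cancel_left]

/-- Key integral inequality (Duhamel-type). -/
lemma lemma1 (M N c b : A) (hM : star M = -M) (hN : star N = -N)
    (hcN : c * N = N * c) {t : ℝ} (ht : 0 ≤ t) :
    ‖Cg M t c * b - b * Cg M t c‖ ≤ ‖c * b - b * c‖ +
      2 * ‖c‖ * ∫ τ in (0:ℝ)..t, ‖Cg M τ (M - N) * b - b * Cg M τ (M - N)‖ := by
  have hM' : star (-M) = -(-M) := by rw [star_neg, hM, neg_neg]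
  have hN' : star (-N) = -(-N) := by rw [star_neg, hN, neg_neg]
  set R : A := M - N with hR
  set F : ℝ → A := fun τ => Cg M τ c * b - b * Cg M τ c with hF
  set W : ℝ → A := fun τ => U M τ * U (-N) τ with hW
  set V : ℝ → A := fun τ => U N τ * U (-M) τ with hV
  set g : ℝ → A := fun τ => V τ * F τ * W τ with hg
  set P : ℝ → A := fun τ => Cg M τ R with hP
  set Ξ : ℝ → A := fun τ => (P τ * b - b * P τ) * Cg M τ c - Cg M τ c * (P τ * b - b * P τ)
    with hΞ
  -- derivative facts
  have hWd : ∀ τ : ℝ, HasDerivAt W (P τ * W τ) τ := by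
    intro τ
    have h := (hasDerivAt_U M τ).mul (hasDerivAt_U (-N) τ)
    convert h using 1
    · rfl
    have hPW : P τ * W τ = U M τ * (R * U (-N) τ) := by
      simp only [hP, hW, Cg]
      exact conj_mul_cancel M τ R (U (-N) τ)
    rw [hPW, U_comm M τ, hR]
    noncomm_ring
  have hVd : ∀ τ : ℝ, HasDerivAt V (-(V τ * P τ)) τ := by
    intro τ
    have h := (hasDerivAt_U N τ).mul (hasDerivAt_U (-M) τ)
    convert h using 1
    · rfl
    have hVP : V τ * P τ = U N τ * (R * U (-M) τ) := by
      simp only [hP, hV, Cg]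
      rw [mul_assoc (U M τ) R (U (-M) τ), mul_assoc (U N τ) (U (-M) τ), U_cancel_left]
    rw [hVP, U_comm N τ, hR]
    noncomm_ring
  have hMC : ∀ τ : ℝ, M * Cg M τ c - Cg M τ c * M = P τ * Cg M τ c - Cg M τ c * P τ := by
    intro τ
    have key : M * c - c * M = R * c - c * R := by
      simp only [hR]; rw [sub_mul, mul_sub, hcN]; noncomm_ring
    have e_left : M * Cg M τ c = U M τ * (M * c) * U (-M) τ := by
      simp only [Cg, ← mul_assoc, U_comm M τ]
    have e_right : Cg M τ c * M = U M τ * (c * M) * U (-M) τ := by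
      simp only [Cg]
      rw [mul_assoc (U M τ * c) (U (-M) τ) M, U_comm_neg M τ, ← mul_assoc (U M τ * c) M,
        mul_assoc (U M τ) c M]
    have e_PC : P τ * Cg M τ c = U M τ * (R * c) * U (-M) τ := by
      simp only [hP, Cg]
      rw [mul_assoc (U M τ) c (U (-M) τ), conj_mul_cancel M τ R (c * U (-M) τ)]
      noncomm_ring
    have e_CP : Cg M τ c * P τ = U M τ * (c * R) * U (-M) τ := by
      simp only [hP, Cg]
      rw [mul_assoc (U M τ) R (U (-M) τ), conj_mul_cancel M τ c (R * U (-M) τ)]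
      noncomm_ring
    rw [e_left, e_right, e_PC, e_CP, ← sub_mul, ← sub_mul, ← mul_sub, ← mul_sub, key]
  have hFd : ∀ τ : ℝ, HasDerivAt F
      ((P τ * Cg M τ c - Cg M τ c * P τ) * b - b * (P τ * Cg M τ c - Cg M τ c * P τ)) τ := by
    intro τ
    have h := ((hasDerivAt_Cg M c τ).mul_const b).sub ((hasDerivAt_Cg M c τ).const_mul b)
    rw [hMC τ] at h
    exact h
  have hgd : ∀ τ : ℝ, HasDerivAt g (V τ * Ξ τ * W τ) τ := by
    intro τ
    have h := (((hVd τ).mul (hFd τ)).mul (hWd τ))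
    convert h using 1
    · rfl
    simp only [hΞ, hF, Pi.mul_apply]
    noncomm_ring
  -- continuity / integrability
  have hcU : ∀ (M' : A), Continuous (U M') := continuous_U
  have hcP : Continuous P := continuous_Cg M R
  have hcC : Continuous fun τ => Cg M τ c := continuous_Cg M c
  have hcΞ : Continuous Ξ := by
    apply Continuous.sub
    · exact ((hcP.mul continuous_const).sub (continuous_const.mul hcP)).mul hcC
    · exact hcC.mul ((hcP.mul continuous_const).sub (continuous_const.mul hcP))
  have hcV : Continuous V := (hcU N).mul (hcU (-M))
  have hcW : Continuous W := (hcU M).mul (hcU (-N))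
  have hcg' : Continuous fun τ => V τ * Ξ τ * W τ := (hcV.mul hcΞ).mul hcW
  have hFTC : ∫ τ in (0:ℝ)..t, (V τ * Ξ τ * W τ) = g t - g 0 :=
    intervalIntegral.integral_eq_sub_of_hasDerivAt (fun τ _ => hgd τ)
      (hcg'.intervalIntegrable 0 t)
  -- unitarity facts
  have hnormW : ∀ τ : ℝ, ‖W τ‖ ≤ 1 := by
    intro τ
    calc ‖U M τ * U (-N) τ‖ ≤ ‖U M τ‖ * ‖U (-N) τ‖ := norm_mul_le _ _
    _ = 1 := by rw [norm_U M hM, norm_U (-N) hN', one_mul]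
  have hnormV : ∀ τ : ℝ, ‖V τ‖ ≤ 1 := by
    intro τ
    calc ‖U N τ * U (-M) τ‖ ≤ ‖U N τ‖ * ‖U (-M) τ‖ := norm_mul_le _ _
    _ = 1 := by rw [norm_U N hN, norm_U (-M) hM', one_mul]
  have sandwich : ∀ (x y z : A), ‖x‖ ≤ 1 → ‖z‖ ≤ 1 → ‖x * y * z‖ ≤ ‖y‖ := by
    intro x y z hx hz
    calc ‖x * y * z‖ ≤ ‖x * y‖ * ‖z‖ := norm_mul_le _ _
    _ ≤ ‖x‖ * ‖y‖ * ‖z‖ := mul_le_mul_of_nonneg_right (norm_mul_le _ _) (norm_nonneg _)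
    _ ≤ ‖y‖ := mul3_le hx hz (norm_nonneg _) (norm_nonneg _) (norm_nonneg _)
  have hWV : ∀ τ : ℝ, W τ * V τ = 1 := by
    intro τ
    simp only [hW, hV]
    rw [mul_assoc (U M τ), ← mul_assoc (U (-N) τ), U_mul_U', one_mul, U_mul_U]
  have hVW : ∀ τ : ℝ, V τ * W τ = 1 := by
    intro τ
    simp only [hW, hV]
    rw [mul_assoc (U N τ), ← mul_assoc (U (-M) τ), U_mul_U', one_mul, U_mul_U]
  have hngF : ∀ τ : ℝ, ‖g τ‖ = ‖F τ‖ := by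
    intro τ
    refine le_antisymm (sandwich _ _ _ (hnormV τ) (hnormW τ)) ?_
    have hFg : F τ = W τ * g τ * V τ := by
      show F τ = W τ * (V τ * F τ * W τ) * V τ
      rw [show W τ * (V τ * F τ * W τ) * V τ = (W τ * V τ) * (F τ * (W τ * V τ)) from by
        noncomm_ring, hWV τ, one_mul, mul_one]
    calc ‖F τ‖ = ‖W τ * g τ * V τ‖ := by rw [← hFg]
    _ ≤ ‖g τ‖ := sandwich _ _ _ (hnormW τ) (hnormV τ)
  -- pointwise bound on the derivative
  have hΞbd : ∀ τ : ℝ, ‖V τ * Ξ τ * W τ‖ ≤ 2 * ‖c‖ * ‖P τ * b - b * P τ‖ := by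
    intro τ
    have h1 : ‖V τ * Ξ τ * W τ‖ ≤ ‖Ξ τ‖ := sandwich _ _ _ (hnormV τ) (hnormW τ)
    have h2 : ‖Ξ τ‖ ≤ 2 * ‖P τ * b - b * P τ‖ * ‖Cg M τ c‖ := norm_comm_le _ _
    have h3 : ‖Cg M τ c‖ = ‖c‖ := norm_Cg M hM τ c
    rw [h3] at h2
    calc ‖V τ * Ξ τ * W τ‖ ≤ ‖Ξ τ‖ := h1
    _ ≤ 2 * ‖P τ * b - b * P τ‖ * ‖c‖ := h2
    _ = 2 * ‖c‖ * ‖P τ * b - b * P τ‖ := by ring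
  -- assemble
  have hg0 : g 0 = c * b - b * c := by
    simp only [hg, hV, hW, hF, U_zero, Cg_zero, one_mul, mul_one]
  have key : ‖g t‖ ≤ ‖g 0‖ + ∫ τ in (0:ℝ)..t, 2 * ‖c‖ * ‖P τ * b - b * P τ‖ := by
    have h1 : ‖g t - g 0‖ ≤ ∫ τ in (0:ℝ)..t, ‖V τ * Ξ τ * W τ‖ := by
      rw [← hFTC]
      exact intervalIntegral.norm_integral_le_integral_norm ht
    have h2 : (∫ τ in (0:ℝ)..t, ‖V τ * Ξ τ * W τ‖) ≤
        ∫ τ in (0:ℝ)..t, 2 * ‖c‖ * ‖P τ * b - b * P τ‖ := by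
      apply intervalIntegral.integral_mono_on ht
      · exact (hcg'.norm).intervalIntegrable 0 t
      · exact ((continuous_const.mul ((hcP.mul continuous_const).sub
          (continuous_const.mul hcP)).norm)).intervalIntegrable 0 t
      · exact fun τ _ => hΞbd τ
    calc ‖g t‖ = ‖g 0 + (g t - g 0)‖ := by congr 1; abel
    _ ≤ ‖g 0‖ + ‖g t - g 0‖ := norm_add_le _ _
    _ ≤ ‖g 0‖ + ∫ τ in (0:ℝ)..t, 2 * ‖c‖ * ‖P τ * b - b * P τ‖ :=
        add_le_add le_rfl (h1.trans h2)
  rw [hngF t, hg0] at key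
  calc ‖Cg M t c * b - b * Cg M t c‖ = ‖F t‖ := rfl
  _ ≤ ‖c * b - b * c‖ + ∫ τ in (0:ℝ)..t, 2 * ‖c‖ * ‖P τ * b - b * P τ‖ := key
  _ = ‖c * b - b * c‖ + 2 * ‖c‖ * ∫ τ in (0:ℝ)..t, ‖P τ * b - b * P τ‖ := by
      rw [intervalIntegral.integral_const_mul]

end LR

end AbstractCstar

section SetDistLemmas

variable {Λ : Type} [MetricSpace Λ]

lemma LR.setDist_le {X Y : Finset Λ} {i j : Λ} (hi : i ∈ X) (hj : j ∈ Y) :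
    setDist X Y ≤ dist i j := by
  apply csInf_le
  · refine ⟨0, fun d hd => ?_⟩
    obtain ⟨i', _, j', _, rfl⟩ := hd
    exact dist_nonneg
  · exact ⟨i, hi, j, hj, rfl⟩

lemma LR.setDist_exists {X Y : Finset Λ} (hX : X.Nonempty) (hY : Y.Nonempty) :
    ∃ i ∈ X, ∃ j ∈ Y, setDist X Y = dist i j := by
  have hfin : {d : ℝ | ∃ i ∈ X, ∃ j ∈ Y, d = dist i j}.Finite := by
    apply Set.Finite.subset (Set.Finite.image (fun p : Λ × Λ => dist p.1 p.2)
      ((X.finite_toSet).prod (Y.finite_toSet)))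
    rintro d ⟨i, hi, j, hj, rfl⟩
    exact ⟨(i, j), ⟨hi, hj⟩, rfl⟩
  have hne : {d : ℝ | ∃ i ∈ X, ∃ j ∈ Y, d = dist i j}.Nonempty := by
    obtain ⟨i, hi⟩ := hX; obtain ⟨j, hj⟩ := hY
    exact ⟨dist i j, i, hi, j, hj, rfl⟩
  exact hne.csInf_mem hfin

lemma LR.setDist_nonneg {X Y : Finset Λ} (hX : X.Nonempty) (hY : Y.Nonempty) :
    0 ≤ setDist X Y := by
  obtain ⟨i, _, j, _, h⟩ := LR.setDist_exists hX hY
  rw [h]; exact dist_nonneg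

lemma LR.pd_zero {Y : Finset Λ} (hY : Y.Nonempty) {i : Λ} (hi : i ∈ Y) :
    setDist {i} Y = 0 := by
  refine le_antisymm ?_ (LR.setDist_nonneg ⟨i, Finset.mem_singleton_self i⟩ hY)
  have := LR.setDist_le (Finset.mem_singleton_self i) hi
  simpa using this

lemma LR.pd_triangle {Y : Finset Λ} (hY : Y.Nonempty) (i i' : Λ) :
    setDist {i} Y ≤ dist i i' + setDist {i'} Y := by
  obtain ⟨i'', hi'', j, hj, h⟩ := LR.setDist_exists ⟨i', Finset.mem_singleton_self i'⟩ hY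
  rw [Finset.mem_singleton] at hi''
  rw [hi''] at h
  rw [h]
  calc setDist {i} Y ≤ dist i j := LR.setDist_le (Finset.mem_singleton_self i) hj
  _ ≤ dist i i' + dist i' j := dist_triangle i i' j

lemma LR.pd_diam {Y : Finset Λ} (hY : Y.Nonempty) {Z : Finset Λ} {i i' : Λ}
    (hi : i ∈ Z) (hi' : i' ∈ Z) :
    setDist {i} Y ≤ Metric.diam (Z : Set Λ) + setDist {i'} Y := by
  refine (LR.pd_triangle hY i i').trans ?_
  have hb : Bornology.IsBounded (Z : Set Λ) := Z.finite_toSet.isBounded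
  have := Metric.dist_le_diam_of_mem hb (Finset.mem_coe.2 hi) (Finset.mem_coe.2 hi')
  linarith

lemma LR.setDist_le_pd {X Y : Finset Λ} (hY : Y.Nonempty) {i : Λ} (hi : i ∈ X) :
    setDist X Y ≤ setDist {i} Y := by
  obtain ⟨i'', hi'', j, hj, h⟩ := LR.setDist_exists ⟨i, Finset.mem_singleton_self i⟩ hY
  rw [Finset.mem_singleton] at hi''
  rw [hi''] at h
  rw [h]
  exact LR.setDist_le hi hj

end SetDistLemmas

section Polynomials

/-- partial exponential sum -/
noncomputable def LR.Ppoly (s : ℝ) (m : ℕ) (t : ℝ) : ℝ :=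
  ∑ j ∈ Finset.range m, (2 * s * t) ^ j / (Nat.factorial j : ℝ)

/-- remainder term -/
noncomputable def LR.Qpoly (s : ℝ) (m : ℕ) (t : ℝ) : ℝ :=
  (2 * s * t) ^ m / (Nat.factorial m : ℝ)

namespace LR

lemma Qpoly_nonneg {s : ℝ} (hs : 0 ≤ s) (m : ℕ) {t : ℝ} (ht : 0 ≤ t) :
    0 ≤ Qpoly s m t := by
  unfold Qpoly; positivity

lemma Ppoly_nonneg {s : ℝ} (hs : 0 ≤ s) (m : ℕ) {t : ℝ} (ht : 0 ≤ t) :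
    0 ≤ Ppoly s m t := by
  unfold Ppoly
  apply Finset.sum_nonneg
  intro j _
  positivity

lemma continuous_Qpoly (s : ℝ) (m : ℕ) : Continuous (Qpoly s m) := by
  unfold Qpoly
  exact ((continuous_const.mul continuous_id).pow m).div_const _

lemma continuous_Ppoly (s : ℝ) (m : ℕ) : Continuous (Ppoly s m) := by
  unfold Ppoly
  exact continuous_finset_sum _ fun j _ =>
    ((continuous_const.mul continuous_id).pow j).div_const _

lemma Qpoly_zero (s t : ℝ) : Qpoly s 0 t = 1 := by simp [Qpoly]

lemma Ppoly_zero (s t : ℝ) : Ppoly s 0 t = 0 := by simp [Ppoly]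

lemma integ_Q (s : ℝ) (m : ℕ) (t : ℝ) :
    2 * s * ∫ τ in (0:ℝ)..t, Qpoly s m τ = Qpoly s (m + 1) t := by
  have h1 : ∀ τ : ℝ, Qpoly s m τ = ((2 * s) ^ m / (Nat.factorial m : ℝ)) * τ ^ m := by
    intro τ; unfold Qpoly; rw [mul_pow]; ring
  rw [intervalIntegral.integral_congr (g := fun τ => ((2 * s) ^ m / (Nat.factorial m : ℝ)) * τ ^ m)
    (fun τ _ => h1 τ), intervalIntegral.integral_const_mul, integral_pow]
  unfold Qpoly
  have hfac : ((Nat.factorial (m + 1) : ℝ)) = (m + 1) * (Nat.factorial m : ℝ) := by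
    rw [Nat.factorial_succ]; push_cast; ring
  have hfm : (Nat.factorial m : ℝ) ≠ 0 := Nat.cast_ne_zero.2 (Nat.factorial_ne_zero m)
  have hm1 : ((m : ℝ) + 1) ≠ 0 := by positivity
  rw [hfac, mul_pow (2 * s) t (m + 1), zero_pow (Nat.succ_ne_zero m), sub_zero]
  field_simp
  ring

lemma Ppoly_eq_sum_Q (s : ℝ) (m : ℕ) (t : ℝ) :
    Ppoly s m t = ∑ j ∈ Finset.range m, Qpoly s j t := rfl

lemma integ_P (s : ℝ) (m : ℕ) (t : ℝ) :
    2 * s * ∫ τ in (0:ℝ)..t, Ppoly s m τ = Ppoly s (m + 1) t - 1 := by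
  simp only [Ppoly_eq_sum_Q]
  rw [intervalIntegral.integral_finset_sum
    (fun j _ => (continuous_Qpoly s j).intervalIntegrable 0 t), Finset.mul_sum]
  have h1 : ∀ j ∈ Finset.range m, 2 * s * ∫ τ in (0:ℝ)..t, Qpoly s j τ = Qpoly s (j + 1) t :=
    fun j _ => integ_Q s j t
  rw [Finset.sum_congr rfl h1, Finset.sum_range_succ' (fun j => Qpoly s j t) m, Qpoly_zero]
  ring

end LR

end Polynomials

section Reorg

lemma LR.sum_reorg {Λ : Type} [Fintype Λ] [DecidableEq Λ] (S : Finset Λ) (v : Finset Λ → ℝ)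
    (hv : ∀ Z, 0 ≤ v Z) :
    ∑ Z ∈ Finset.univ.filter (fun Z : Finset Λ => (Z ∩ S).Nonempty), v Z ≤
      ∑ i ∈ S, ∑ Z ∈ Finset.univ.filter (fun Z : Finset Λ => i ∈ Z), v Z := by
  have step1 : ∑ Z ∈ Finset.univ.filter (fun Z : Finset Λ => (Z ∩ S).Nonempty), v Z ≤
      ∑ Z ∈ Finset.univ.filter (fun Z : Finset Λ => (Z ∩ S).Nonempty),
        ((Z ∩ S).card : ℝ) * v Z := by
    apply Finset.sum_le_sum
    intro Z hZ
    have h1 : 1 ≤ (Z ∩ S).card := Finset.card_pos.2 (Finset.mem_filter.1 hZ).2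
    have h1' : (1 : ℝ) ≤ ((Z ∩ S).card : ℝ) := by exact_mod_cast h1
    nlinarith [hv Z]
  have step2 : ∑ Z ∈ Finset.univ.filter (fun Z : Finset Λ => (Z ∩ S).Nonempty),
      ((Z ∩ S).card : ℝ) * v Z ≤ ∑ Z ∈ Finset.univ, ((Z ∩ S).card : ℝ) * v Z :=
    Finset.sum_le_sum_of_subset_of_nonneg (Finset.filter_subset _ _)
      (fun Z _ _ => mul_nonneg (Nat.cast_nonneg _) (hv Z))
  have step3 : ∑ Z ∈ Finset.univ, ((Z ∩ S).card : ℝ) * v Z =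
      ∑ i ∈ S, ∑ Z ∈ Finset.univ.filter (fun Z : Finset Λ => i ∈ Z), v Z := by
    have h2 : ∀ Z : Finset Λ, ((Z ∩ S).card : ℝ) * v Z = ∑ _i ∈ Z ∩ S, v Z := by
      intro Z; rw [Finset.sum_const, nsmul_eq_mul]
    rw [Finset.sum_congr rfl (fun Z _ => h2 Z)]
    exact Finset.sum_comm' (by
      intro Z i
      simp only [Finset.mem_univ, Finset.mem_inter, Finset.mem_filter, true_and]
      try tauto)
  exact (step1.trans step2).trans_eq step3

end Reorg


section KeyInduction

open LR

lemma LR.key_induction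
    {A : Type*} [NormedRing A] [StarRing A] [CStarRing A] [NormedAlgebra ℂ A]
    [CompleteSpace A] [StarModule ℂ A] [NormOneClass A]
    {Λ : Type} [Fintype Λ] [DecidableEq Λ] [MetricSpace Λ]
    (μ s : ℝ) (hμ : 0 < μ) (hs : 0 < s)
    (u : Finset Λ → A) (b : A) (Y : Finset Λ) (hY : Y.Nonempty)
    (hustar : ∀ Z, star (u Z) = u Z)
    (hudisj : ∀ Z W, Disjoint Z W → u Z * u W = u W * u Z)
    (hub : ∀ Z, Z ∩ Y = ∅ → u Z * b = b * u Z)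
    (hdec : ∀ i : Λ, ∑ Z ∈ Finset.univ.filter (fun Z : Finset Λ => i ∈ Z),
        ‖u Z‖ * (Z.card : ℝ) * Real.exp (μ * Metric.diam (Z : Set Λ)) ≤ s) :
    ∀ m : ℕ, ∀ S : Finset Λ, S.Nonempty → ∀ c : A,
      (∀ Z : Finset Λ, Z ∩ S = ∅ → c * u Z = u Z * c) → (S ∩ Y = ∅ → c * b = b * c) →
      ∀ t : ℝ, 0 ≤ t →
      ‖Cg (Complex.I • ∑ Z, u Z) t c * b - b * Cg (Complex.I • ∑ Z, u Z) t c‖ ≤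
        2 * ‖c‖ * ‖b‖ *
          ∑ i ∈ S, (Real.exp (-(μ * setDist {i} Y)) * Ppoly s m t + Qpoly s m t) := by
  have hHstar : star (∑ Z : Finset Λ, u Z) = ∑ Z : Finset Λ, u Z := by
    rw [star_sum]
    exact Finset.sum_congr rfl fun Z _ => hustar Z
  set MH : A := Complex.I • ∑ Z : Finset Λ, u Z with hMH
  have hMstar : star MH = -MH := by
    rw [hMH, star_smul, hHstar, Complex.star_def, Complex.conj_I, neg_smul]
  intro m
  induction m with
  | zero =>
    intro S hS c hloc hcb t ht
    have hb1 : ‖Cg MH t c * b - b * Cg MH t c‖ ≤ 2 * ‖c‖ * ‖b‖ := by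
      have := norm_comm_le (Cg MH t c) b
      rwa [norm_Cg MH hMstar t c] at this
    have hsum : ∑ i ∈ S, (Real.exp (-(μ * setDist {i} Y)) * Ppoly s 0 t + Qpoly s 0 t)
        = (S.card : ℝ) := by
      rw [Finset.sum_congr rfl (fun i _ => by rw [Ppoly_zero, Qpoly_zero, mul_zero, zero_add])]
      rw [Finset.sum_const, nsmul_eq_mul, mul_one]
    rw [hsum]
    have hc1 : (1 : ℝ) ≤ (S.card : ℝ) := by exact_mod_cast Finset.card_pos.2 hS
    calc ‖Cg MH t c * b - b * Cg MH t c‖ ≤ 2 * ‖c‖ * ‖b‖ := hb1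
    _ ≤ 2 * ‖c‖ * ‖b‖ * (S.card : ℝ) := le_mul_of_one_le_right (by positivity) hc1
  | succ m IH =>
    intro S hS c hloc hcb t ht
    classical
    set Fs : Finset (Finset Λ) := Finset.univ.filter (fun Z : Finset Λ => (Z ∩ S).Nonempty)
      with hFs
    set K : A := ∑ Z ∈ Fs, u Z with hK
    set NN : A := Complex.I • ((∑ Z : Finset Λ, u Z) - K) with hNN
    have hKstar : star K = K := by
      rw [hK, star_sum]
      exact Finset.sum_congr rfl fun Z _ => hustar Z
    have hNstar : star NN = -NN := by
      rw [hNN, star_smul, star_sub, hHstar, hKstar, Complex.star_def, Complex.conj_I, neg_smul]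
    have hRform : MH - NN = Complex.I • K := by
      rw [hMH, hNN, ← smul_sub, sub_sub_cancel]
    have hHmK : (∑ Z : Finset Λ, u Z) - K = ∑ Z ∈ Finset.univ.filter
        (fun Z : Finset Λ => ¬ (Z ∩ S).Nonempty), u Z := by
      have := Finset.sum_filter_add_sum_filter_not Finset.univ
        (fun Z : Finset Λ => (Z ∩ S).Nonempty) u
      rw [hK, hFs, ← this, add_sub_cancel_left]
    have hcN : c * NN = NN * c := by
      rw [hNN, mul_smul_comm, smul_mul_assoc]
      congr 1
      rw [hHmK, Finset.mul_sum, Finset.sum_mul]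
      refine Finset.sum_congr rfl fun Z hZ => ?_
      exact hloc Z (by
        simpa [Finset.not_nonempty_iff_eq_empty] using (Finset.mem_filter.1 hZ).2)
    have L1 := lemma1 MH NN c b hMstar hNstar hcN ht
    set IP : ℝ := ∫ τ in (0:ℝ)..t, Ppoly s m τ with hIPd
    set IQ : ℝ := ∫ τ in (0:ℝ)..t, Qpoly s m τ with hIQd
    have hIPnn : 0 ≤ IP :=
      intervalIntegral.integral_nonneg ht (fun τ hτ => Ppoly_nonneg hs.le m hτ.1)
    have hIQnn : 0 ≤ IQ :=
      intervalIntegral.integral_nonneg ht (fun τ hτ => Qpoly_nonneg hs.le m hτ.1)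
    -- pointwise bound on the integrand
    set φ : ℝ → ℝ := fun τ => ∑ Z ∈ Fs, 2 * ‖u Z‖ * ‖b‖ *
      ∑ i' ∈ Z, (Real.exp (-(μ * setDist {i'} Y)) * Ppoly s m τ + Qpoly s m τ) with hφ
    have hptwise : ∀ τ ∈ Set.Icc (0:ℝ) t,
        ‖Cg MH τ (MH - NN) * b - b * Cg MH τ (MH - NN)‖ ≤ φ τ := by
      intro τ hτ
      rw [hRform, Cg_smul, smul_mul_assoc, mul_smul_comm, ← smul_sub, norm_smul,
        Complex.norm_I, one_mul, hK, Cg_sum]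
      have e2 : (∑ Z ∈ Fs, Cg MH τ (u Z)) * b - b * (∑ Z ∈ Fs, Cg MH τ (u Z)) =
          ∑ Z ∈ Fs, (Cg MH τ (u Z) * b - b * Cg MH τ (u Z)) := by
        rw [Finset.sum_mul, Finset.mul_sum, ← Finset.sum_sub_distrib]
      rw [e2]
      refine (norm_sum_le _ _).trans ?_
      apply Finset.sum_le_sum
      intro Z hZ
      have hZne : Z.Nonempty := by
        obtain ⟨x, hx⟩ := (Finset.mem_filter.1 hZ).2
        exact ⟨x, (Finset.mem_inter.1 hx).1⟩
      exact IH Z hZne (u Z)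
        (fun W hW => hudisj Z W (Finset.disjoint_iff_inter_eq_empty.2
          (by rwa [Finset.inter_comm] at hW)))
        (hub Z) τ hτ.1
    -- continuity of both sides
    have hcont1 : Continuous fun τ => ‖Cg MH τ (MH - NN) * b - b * Cg MH τ (MH - NN)‖ :=
      (((continuous_Cg MH (MH - NN)).mul continuous_const).sub
        (continuous_const.mul (continuous_Cg MH (MH - NN)))).norm
    have hcont2 : Continuous φ := by
      apply continuous_finset_sum
      intro Z _
      apply Continuous.mul continuous_const
      apply continuous_finset_sum
      intro i _
      exact (continuous_const.mul (continuous_Ppoly s m)).add (continuous_Qpoly s m)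
    have hintle : (∫ τ in (0:ℝ)..t, ‖Cg MH τ (MH - NN) * b - b * Cg MH τ (MH - NN)‖) ≤
        ∫ τ in (0:ℝ)..t, φ τ :=
      intervalIntegral.integral_mono_on ht (hcont1.intervalIntegrable 0 t)
        (hcont2.intervalIntegrable 0 t) hptwise
    -- evaluate the integral of φ
    have hval : (∫ τ in (0:ℝ)..t, φ τ) = ∑ Z ∈ Fs, 2 * ‖u Z‖ * ‖b‖ *
        ∑ i' ∈ Z, (Real.exp (-(μ * setDist {i'} Y)) * IP + IQ) := by
      rw [hφ, intervalIntegral.integral_finset_sum (fun Z _ => by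
        apply Continuous.intervalIntegrable
        apply Continuous.mul continuous_const
        apply continuous_finset_sum
        intro i _
        exact (continuous_const.mul (continuous_Ppoly s m)).add (continuous_Qpoly s m))]
      refine Finset.sum_congr rfl fun Z _ => ?_
      rw [intervalIntegral.integral_const_mul]
      congr 1
      rw [intervalIntegral.integral_finset_sum (fun i _ => by
        apply Continuous.intervalIntegrable
        exact (continuous_const.mul (continuous_Ppoly s m)).add (continuous_Qpoly s m))]
      refine Finset.sum_congr rfl fun i _ => ?_
      rw [intervalIntegral.integral_add (f := fun τ => Real.exp (-(μ * setDist {i} Y)) * Ppoly s m τ)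
        (g := Qpoly s m)
        ((continuous_const.mul (continuous_Ppoly s m)).intervalIntegrable 0 t)
        ((continuous_Qpoly s m).intervalIntegrable 0 t),
        intervalIntegral.integral_const_mul]
    -- reorganize the sum over Fs
    set v : Finset Λ → ℝ := fun Z => ‖u Z‖ *
      ∑ i' ∈ Z, (Real.exp (-(μ * setDist {i'} Y)) * IP + IQ) with hv
    have hvnn : ∀ Z, 0 ≤ v Z := by
      intro Z
      apply mul_nonneg (norm_nonneg _)
      apply Finset.sum_nonneg
      intro i _
      positivity
    have hsplit : (∑ Z ∈ Fs, 2 * ‖u Z‖ * ‖b‖ *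
        ∑ i' ∈ Z, (Real.exp (-(μ * setDist {i'} Y)) * IP + IQ)) =
        2 * ‖b‖ * ∑ Z ∈ Fs, v Z := by
      rw [Finset.mul_sum]
      exact Finset.sum_congr rfl fun Z _ => by rw [hv]; ring
    have hperi : ∀ i ∈ S, (∑ Z ∈ Finset.univ.filter (fun Z : Finset Λ => i ∈ Z), v Z) ≤
        s * (Real.exp (-(μ * setDist {i} Y)) * IP + IQ) := by
      intro i _
      have h1 : ∀ Z ∈ Finset.univ.filter (fun Z : Finset Λ => i ∈ Z),
          v Z ≤ (‖u Z‖ * (Z.card : ℝ) * Real.exp (μ * Metric.diam (Z : Set Λ))) *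
            (Real.exp (-(μ * setDist {i} Y)) * IP + IQ) := by
        intro Z hZ
        have hiZ : i ∈ Z := (Finset.mem_filter.1 hZ).2
        have hterm : ∀ i' ∈ Z, Real.exp (-(μ * setDist {i'} Y)) * IP + IQ ≤
            Real.exp (μ * Metric.diam (Z : Set Λ)) *
              (Real.exp (-(μ * setDist {i} Y)) * IP + IQ) := by
          intro i' hi'
          have hd := pd_diam hY hiZ hi'
          have he : Real.exp (-(μ * setDist {i'} Y)) ≤
              Real.exp (μ * Metric.diam (Z : Set Λ)) * Real.exp (-(μ * setDist {i} Y)) := by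
            rw [← Real.exp_add]
            apply Real.exp_le_exp.2
            nlinarith
          have hone : (1:ℝ) ≤ Real.exp (μ * Metric.diam (Z : Set Λ)) :=
            Real.one_le_exp (by positivity)
          calc Real.exp (-(μ * setDist {i'} Y)) * IP + IQ ≤
              (Real.exp (μ * Metric.diam (Z : Set Λ)) * Real.exp (-(μ * setDist {i} Y))) * IP
                + Real.exp (μ * Metric.diam (Z : Set Λ)) * IQ :=
              add_le_add (mul_le_mul_of_nonneg_right he hIPnn)
                (le_mul_of_one_le_left hIQnn hone)
          _ = Real.exp (μ * Metric.diam (Z : Set Λ)) *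
              (Real.exp (-(μ * setDist {i} Y)) * IP + IQ) := by ring
        have hsumZ : (∑ i' ∈ Z, (Real.exp (-(μ * setDist {i'} Y)) * IP + IQ)) ≤
            (Z.card : ℝ) * (Real.exp (μ * Metric.diam (Z : Set Λ)) *
              (Real.exp (-(μ * setDist {i} Y)) * IP + IQ)) := by
          have := Finset.sum_le_card_nsmul Z _ _ hterm
          rwa [nsmul_eq_mul] at this
        calc v Z ≤ ‖u Z‖ * ((Z.card : ℝ) * (Real.exp (μ * Metric.diam (Z : Set Λ)) *
            (Real.exp (-(μ * setDist {i} Y)) * IP + IQ))) :=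
            mul_le_mul_of_nonneg_left hsumZ (norm_nonneg _)
        _ = (‖u Z‖ * (Z.card : ℝ) * Real.exp (μ * Metric.diam (Z : Set Λ))) *
            (Real.exp (-(μ * setDist {i} Y)) * IP + IQ) := by ring
      calc (∑ Z ∈ Finset.univ.filter (fun Z : Finset Λ => i ∈ Z), v Z) ≤
          ∑ Z ∈ Finset.univ.filter (fun Z : Finset Λ => i ∈ Z),
            (‖u Z‖ * (Z.card : ℝ) * Real.exp (μ * Metric.diam (Z : Set Λ))) *
              (Real.exp (-(μ * setDist {i} Y)) * IP + IQ) := Finset.sum_le_sum h1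
      _ = (∑ Z ∈ Finset.univ.filter (fun Z : Finset Λ => i ∈ Z),
            ‖u Z‖ * (Z.card : ℝ) * Real.exp (μ * Metric.diam (Z : Set Λ))) *
              (Real.exp (-(μ * setDist {i} Y)) * IP + IQ) := by rw [Finset.sum_mul]
      _ ≤ s * (Real.exp (-(μ * setDist {i} Y)) * IP + IQ) :=
          mul_le_mul_of_nonneg_right (hdec i) (by positivity)
    have hreorg : (∑ Z ∈ Fs, v Z) ≤ ∑ i ∈ S, s * (Real.exp (-(μ * setDist {i} Y)) * IP + IQ) :=
      (sum_reorg S v hvnn).trans (Finset.sum_le_sum hperi)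
    -- first term bound
    have hfirst : ‖c * b - b * c‖ ≤ 2 * ‖c‖ * ‖b‖ *
        ∑ i ∈ S, Real.exp (-(μ * setDist {i} Y)) := by
      by_cases hSY : S ∩ Y = ∅
      · rw [hcb hSY, sub_self, norm_zero]
        have : (0:ℝ) ≤ ∑ i ∈ S, Real.exp (-(μ * setDist {i} Y)) :=
          Finset.sum_nonneg fun i _ => (Real.exp_pos _).le
        positivity
      · obtain ⟨i0, hi0⟩ := Finset.nonempty_iff_ne_empty.2 hSY
        have hi0S : i0 ∈ S := (Finset.mem_inter.1 hi0).1
        have hi0Y : i0 ∈ Y := (Finset.mem_inter.1 hi0).2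
        have h0 : Real.exp (-(μ * setDist {i0} Y)) = 1 := by
          rw [pd_zero hY hi0Y, mul_zero, neg_zero, Real.exp_zero]
        have hle : (1:ℝ) ≤ ∑ i ∈ S, Real.exp (-(μ * setDist {i} Y)) := by
          have hss := Finset.single_le_sum (f := fun i => Real.exp (-(μ * setDist {i} Y)))
            (fun i _ => (Real.exp_pos _).le) hi0S
          simpa only [h0] using hss
        calc ‖c * b - b * c‖ ≤ 2 * ‖c‖ * ‖b‖ := norm_comm_le c b
        _ ≤ 2 * ‖c‖ * ‖b‖ * ∑ i ∈ S, Real.exp (-(μ * setDist {i} Y)) :=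
            le_mul_of_one_le_right (by positivity) hle
    -- put everything together
    have hP1 : Ppoly s (m+1) t = 2 * s * IP + 1 := by
      have := integ_P s m t
      rw [← hIPd] at this
      linarith
    have hQ1 : Qpoly s (m+1) t = 2 * s * IQ := by
      have := integ_Q s m t
      rw [← hIQd] at this
      linarith
    calc ‖Cg MH t c * b - b * Cg MH t c‖ ≤ ‖c * b - b * c‖ +
        2 * ‖c‖ * ∫ τ in (0:ℝ)..t, ‖Cg MH τ (MH - NN) * b - b * Cg MH τ (MH - NN)‖ := L1
    _ ≤ (2 * ‖c‖ * ‖b‖ * ∑ i ∈ S, Real.exp (-(μ * setDist {i} Y))) +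
        2 * ‖c‖ * ∫ τ in (0:ℝ)..t, φ τ :=
        add_le_add hfirst (mul_le_mul_of_nonneg_left hintle (by positivity))
    _ = (2 * ‖c‖ * ‖b‖ * ∑ i ∈ S, Real.exp (-(μ * setDist {i} Y))) +
        2 * ‖c‖ * (2 * ‖b‖ * ∑ Z ∈ Fs, v Z) := by rw [hval, hsplit]
    _ ≤ (2 * ‖c‖ * ‖b‖ * ∑ i ∈ S, Real.exp (-(μ * setDist {i} Y))) +
        2 * ‖c‖ * (2 * ‖b‖ * ∑ i ∈ S, s * (Real.exp (-(μ * setDist {i} Y)) * IP + IQ)) := by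
        have h2 : (0:ℝ) ≤ 2 * ‖c‖ := by positivity
        have h3 : (0:ℝ) ≤ 2 * ‖b‖ := by positivity
        exact add_le_add le_rfl (mul_le_mul_of_nonneg_left
          (mul_le_mul_of_nonneg_left hreorg h3) h2)
    _ = 2 * ‖c‖ * ‖b‖ *
        ∑ i ∈ S, (Real.exp (-(μ * setDist {i} Y)) * Ppoly s (m+1) t + Qpoly s (m+1) t) := by
        rw [hP1, hQ1]
        simp only [Finset.mul_sum]
        rw [← Finset.sum_add_distrib]
        refine Finset.sum_congr rfl fun i _ => ?_
        ring

end KeyInduction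

section FinalGlue

open scoped Matrix.Norms.L2Operator
open LR

lemma LR.opNorm_eq_norm {n : ℕ} (M : Matrix (Fin n) (Fin n) ℂ) : opNorm M = ‖M‖ := rfl

lemma LR.timeEvol_eq_Cg {n : ℕ} (H A : Matrix (Fin n) (Fin n) ℂ) (t : ℝ) :
    timeEvol H A t = Cg (Complex.I • H) t A := by
  rw [timeEvol, Cg, U, U, key_smul H Complex.I t, ← neg_mul, key_smul H (-Complex.I) t,
    neg_smul]

theorem LR.core {n : ℕ} (hn : 1 ≤ n) {Λ : Type} [Fintype Λ] [DecidableEq Λ] [MetricSpace Λ]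
    (μ s : ℝ) (hμ : 0 < μ) (hs : 0 < s)
    (h : Finset Λ → Matrix (Fin n) (Fin n) ℂ)
    (hherm : ∀ Z, (h Z).IsHermitian)
    (hdisj : ∀ Z W : Finset Λ, Disjoint Z W → h Z * h W = h W * h Z)
    (hdecay : ∀ i : Λ, ∑ Z ∈ Finset.univ.filter (fun Z : Finset Λ => i ∈ Z),
        opNorm (h Z) * (Z.card : ℝ) * Real.exp (μ * Metric.diam (Z : Set Λ)) ≤ s)
    (A B : Matrix (Fin n) (Fin n) ℂ) (X Y : Finset Λ)
    (hX : X.Nonempty) (hY : Y.Nonempty)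
    (hA : IsLocalized h A X) (hB : IsLocalized h B Y)
    (hAB : A * B = B * A) (hXY : 0 < setDist X Y) (t : ℝ) (ht : 0 ≤ t)
    (hlc : (4 * s / μ) * t ≤ setDist X Y) :
    opNorm (timeEvol (∑ Z, h Z) A t * B - B * timeEvol (∑ Z, h Z) A t) ≤
      2 * (X.card : ℝ) * opNorm A * opNorm B * Real.exp (-(μ / 2) * setDist X Y) := by
  classical
  haveI : Nonempty (Fin n) := ⟨⟨0, hn⟩⟩
  haveI hnt : Nontrivial (Matrix (Fin n) (Fin n) ℂ) := by infer_instance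
  haveI : NormOneClass (Matrix (Fin n) (Fin n) ℂ) := ⟨CStarRing.norm_one⟩
  have hustar : ∀ Z, star (h Z) = h Z := fun Z => by
    rw [Matrix.star_eq_conjTranspose]; exact hherm Z
  have hub : ∀ Z, Z ∩ Y = ∅ → h Z * B = B * h Z := fun Z hZ => (hB Z hZ).symm
  have hdec : ∀ i : Λ, ∑ Z ∈ Finset.univ.filter (fun Z : Finset Λ => i ∈ Z),
      ‖h Z‖ * (Z.card : ℝ) * Real.exp (μ * Metric.diam (Z : Set Λ)) ≤ s := hdecay
  have key := LR.key_induction μ s hμ hs h B Y hY hustar hdisj hub hdec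
  set d : ℝ := setDist X Y with hd
  have hd0 : 0 ≤ d := hXY.le
  set C : ℝ := 2 * ‖A‖ * ‖B‖ * (X.card : ℝ) with hC
  set E : ℝ := Real.exp (-(μ * d)) * Real.exp (2 * s * t) with hE
  have hEC : 0 ≤ C := by positivity
  -- bound for each m
  have hbound : ∀ m : ℕ,
      opNorm (timeEvol (∑ Z, h Z) A t * B - B * timeEvol (∑ Z, h Z) A t) ≤
        C * (E + Qpoly s m t) := by
    intro m
    have h1 := key m X hX A hA (fun _ => hAB) t ht
    rw [opNorm_eq_norm, timeEvol_eq_Cg]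
    refine h1.trans ?_
    have h2 : ∀ i ∈ X, Real.exp (-(μ * setDist {i} Y)) * Ppoly s m t + Qpoly s m t ≤
        E + Qpoly s m t := by
      intro i hi
      have h3 : Real.exp (-(μ * setDist {i} Y)) ≤ Real.exp (-(μ * d)) := by
        apply Real.exp_le_exp.2
        have := setDist_le_pd (X := X) hY hi
        nlinarith
      have h4 : Ppoly s m t ≤ Real.exp (2 * s * t) := by
        unfold Ppoly
        exact Real.sum_le_exp_of_nonneg (by positivity) m
      have h5 : Real.exp (-(μ * setDist {i} Y)) * Ppoly s m t ≤ E := by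
        rw [hE]
        exact mul_le_mul h3 h4 (Ppoly_nonneg hs.le m ht) (Real.exp_pos _).le
      linarith
    have h6 : (∑ i ∈ X, (Real.exp (-(μ * setDist {i} Y)) * Ppoly s m t + Qpoly s m t)) ≤
        (X.card : ℝ) * (E + Qpoly s m t) := by
      have := Finset.sum_le_card_nsmul X _ _ h2
      rwa [nsmul_eq_mul] at this
    calc 2 * ‖A‖ * ‖B‖ *
        ∑ i ∈ X, (Real.exp (-(μ * setDist {i} Y)) * Ppoly s m t + Qpoly s m t) ≤
        2 * ‖A‖ * ‖B‖ * ((X.card : ℝ) * (E + Qpoly s m t)) :=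
        mul_le_mul_of_nonneg_left h6 (by positivity)
    _ = C * (E + Qpoly s m t) := by rw [hC]; ring
  -- limit m → ∞
  have hQlim : Filter.Tendsto (fun m => Qpoly s m t) Filter.atTop (nhds 0) := by
    have := FloorSemiring.tendsto_pow_div_factorial_atTop (2 * s * t)
    exact this
  have hlim : Filter.Tendsto (fun m => C * (E + Qpoly s m t)) Filter.atTop
      (nhds (C * (E + 0))) := (hQlim.const_add E).const_mul C
  have hfinal : opNorm (timeEvol (∑ Z, h Z) A t * B - B * timeEvol (∑ Z, h Z) A t) ≤
      C * (E + 0) := ge_of_tendsto' hlim hbound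
  -- final exponent comparison
  have hexp : E ≤ Real.exp (-(μ / 2) * d) := by
    rw [hE, ← Real.exp_add]
    apply Real.exp_le_exp.2
    have h7 : 4 * s * t ≤ d * μ := by
      rw [div_mul_eq_mul_div] at hlc
      exact (div_le_iff₀ hμ).1 hlc
    nlinarith
  calc opNorm (timeEvol (∑ Z, h Z) A t * B - B * timeEvol (∑ Z, h Z) A t) ≤ C * (E + 0) :=
      hfinal
  _ = C * E := by ring
  _ ≤ C * Real.exp (-(μ / 2) * d) := mul_le_mul_of_nonneg_left hexp hEC
  _ = 2 * (X.card : ℝ) * opNorm A * opNorm B * Real.exp (-(μ / 2) * setDist X Y) := by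
      rw [hC, opNorm_eq_norm, opNorm_eq_norm, ← hd]; ring

end FinalGlue

section NegTime

open LR

lemma LR.opNorm_neg {n : ℕ} (M : Matrix (Fin n) (Fin n) ℂ) : opNorm (-M) = opNorm M := by
  unfold opNorm
  rw [map_neg, norm_neg]

lemma LR.timeEvol_neg {n : ℕ} {Λ : Type} [Fintype Λ] [DecidableEq Λ]
    (h : Finset Λ → Matrix (Fin n) (Fin n) ℂ) (A : Matrix (Fin n) (Fin n) ℂ) (t : ℝ) :
    timeEvol (∑ Z, (fun Z => -h Z) Z) A (-t) = timeEvol (∑ Z, h Z) A t := by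
  rw [timeEvol, timeEvol]
  have hsum : (∑ Z : Finset Λ, (fun Z => -h Z) Z) = -(∑ Z : Finset Λ, h Z) := by
    simp
  rw [hsum]
  congr 2
  · push_cast
    rw [mul_neg, neg_smul, smul_neg, neg_neg]
  · push_cast
    rw [mul_neg, neg_neg, smul_neg, ← neg_smul]

end NegTime

/-- Light-cone form of the Lieb-Robinson bound: with `v_LR = 4s/μ`, if
`dist(X,Y) ≥ v_LR |t|` then `‖[A(t),B]‖ ≤ 2|X| ‖A‖‖B‖ e^{−(μ/2) dist(X,Y)}`. -/
theorem stmt_4 {n : ℕ} (hn : 1 ≤ n) {Λ : Type} [Fintype Λ] [DecidableEq Λ] [MetricSpace Λ]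
    (μ s : ℝ) (hμ : 0 < μ) (hs : 0 < s)
    (h : Finset Λ → Matrix (Fin n) (Fin n) ℂ)
    (hherm : ∀ Z, (h Z).IsHermitian)
    (hdisj : ∀ Z W : Finset Λ, Disjoint Z W → h Z * h W = h W * h Z)
    (hdecay : ∀ i : Λ, ∑ Z ∈ Finset.univ.filter (fun Z : Finset Λ => i ∈ Z),
        opNorm (h Z) * (Z.card : ℝ) * Real.exp (μ * Metric.diam (Z : Set Λ)) ≤ s)
    (A B : Matrix (Fin n) (Fin n) ℂ) (X Y : Finset Λ)
    (hX : X.Nonempty) (hY : Y.Nonempty)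
    (hA : IsLocalized h A X) (hB : IsLocalized h B Y)
    (hAB : A * B = B * A) (hXY : 0 < setDist X Y) (t : ℝ)
    (hlc : (4 * s / μ) * |t| ≤ setDist X Y) :
    opNorm (timeEvol (∑ Z, h Z) A t * B - B * timeEvol (∑ Z, h Z) A t) ≤
      2 * (X.card : ℝ) * opNorm A * opNorm B * Real.exp (-(μ / 2) * setDist X Y) := by
  rcases le_or_gt 0 t with ht | ht
  · rw [abs_of_nonneg ht] at hlc
    exact LR.core hn μ s hμ hs h hherm hdisj hdecay A B X Y hX hY hA hB hAB hXY t ht hlc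
  · rw [abs_of_neg ht] at hlc
    rw [← LR.timeEvol_neg h A t]
    have hherm' : ∀ Z, ((fun Z => -h Z) Z).IsHermitian := fun Z => (hherm Z).neg
    have hdisj' : ∀ Z W : Finset Λ, Disjoint Z W →
        (fun Z => -h Z) Z * (fun Z => -h Z) W = (fun Z => -h Z) W * (fun Z => -h Z) Z := by
      intro Z W hZW
      simp only [neg_mul_neg]
      exact hdisj Z W hZW
    have hdecay' : ∀ i : Λ, ∑ Z ∈ Finset.univ.filter (fun Z : Finset Λ => i ∈ Z),
        opNorm ((fun Z => -h Z) Z) * (Z.card : ℝ) * Real.exp (μ * Metric.diam (Z : Set Λ))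
          ≤ s := by
      intro i
      simp only [LR.opNorm_neg]
      exact hdecay i
    have hA' : IsLocalized (fun Z => -h Z) A X := by
      intro Z hZ
      simp only [mul_neg, neg_mul, hA Z hZ]
    have hB' : IsLocalized (fun Z => -h Z) B Y := by
      intro Z hZ
      simp only [mul_neg, neg_mul, hB Z hZ]
    exact LR.core hn μ s hμ hs (fun Z => -h Z) hherm' hdisj' hdecay' A B X Y hX hY hA' hB'
      hAB hXY (-t) (by linarith) hlc
end

section
/- Let Λ be a finite metric space with metric dist; for Z ⊆ Λ let diam(Z) = max_{i,j∈Z} dist(i,j), and for i ∈ Λ and Y ⊆ Λ let dist(i,Y) = min_{j∈Y} dist(i,j). Let w assign to each subset Z ⊆ Λ a nonnegative real w(Z), and let μ, s > 0 satisfy, for every i ∈ Λ, Σ_{Z ∋ i} w(Z)·|Z|·exp(μ·diam(Z)) ≤ s. Then for all nonempty subsets X, Y ⊆ Λ and every integer k ≥ 1, the sum over all k-tuples (Z₁,…,Z_k) of subsets of Λ satisfying Z₁ ∩ X ≠ ∅, Z_j ∩ Z_{j+1} ≠ ∅ for 1 ≤ j < k, and Z_k ∩ Y ≠ ∅, of the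 product Π_{j=1}^k w(Z_j), is at most s^k · Σ_{i∈X} e^{−μ·dist(i,Y)}. -/
open scoped Classical

/-- `chainSum w X Y k` is the sum over `(k+1)`-tuples `(Z₀, …, Z_k)` of subsets of `Λ` with
`Z₀ ∩ X ≠ ∅`, `Z_j ∩ Z_{j+1} ≠ ∅` for consecutive indices, and `Z_k ∩ Y ≠ ∅`, of the products
`∏_j w (Z_j)`; i.e. the sum over chains of length `k+1` connecting `X` to `Y`. -/
noncomputable def chainSum {Λ : Type} [Fintype Λ] [DecidableEq Λ]
    (w : Finset Λ → ℝ) (X Y : Finset Λ) (k : ℕ) : ℝ :=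
  ∑ Z : Fin (k + 1) → Finset Λ,
    if (Z 0 ∩ X).Nonempty ∧ (∀ j : Fin k, (Z j.castSucc ∩ Z j.succ).Nonempty) ∧
        (Z (Fin.last k) ∩ Y).Nonempty
    then ∏ j, w (Z j) else 0

section aux
variable {Λ : Type} [Fintype Λ] [DecidableEq Λ] [MetricSpace Λ]

noncomputable def Fsum (μ : ℝ) (Y X : Finset Λ) : ℝ :=
  ∑ i ∈ X, Real.exp (-μ * Metric.infDist i (Y : Set Λ))

omit [Fintype Λ] [DecidableEq Λ] in
lemma Fsum_nonneg (μ : ℝ) (Y X : Finset Λ) : 0 ≤ Fsum μ Y X :=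
  Finset.sum_nonneg fun _ _ => (Real.exp_pos _).le

lemma key_step (w : Finset Λ → ℝ) (hw : ∀ Z, 0 ≤ w Z) (μ s : ℝ) (hμ : 0 < μ)
    (hdecay : ∀ i : Λ, ∑ Z ∈ Finset.univ.filter (fun Z : Finset Λ => i ∈ Z),
        w Z * (Z.card : ℝ) * Real.exp (μ * Metric.diam (Z : Set Λ)) ≤ s)
    (X Y : Finset Λ) :
    ∑ Z : Finset Λ, (if (Z ∩ X).Nonempty then w Z * Fsum μ Y Z else 0)
      ≤ s * Fsum μ Y X := by
  have step1 : ∀ Z : Finset Λ,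
      (if (Z ∩ X).Nonempty then w Z * Fsum μ Y Z else 0)
        ≤ ∑ i ∈ X ∩ Z, w Z * (Z.card : ℝ) * Real.exp (μ * Metric.diam (Z : Set Λ))
            * Real.exp (-μ * Metric.infDist i (Y : Set Λ)) := by
    intro Z
    split_ifs with h
    · obtain ⟨i, hi⟩ := h
      have hiZ : i ∈ Z := (Finset.mem_inter.mp hi).1
      have hiX : i ∈ X := (Finset.mem_inter.mp hi).2
      have hbd : Bornology.IsBounded (Z : Set Λ) := Z.finite_toSet.isBounded
      have hFZ : Fsum μ Y Z ≤ (Z.card : ℝ) * Real.exp (μ * Metric.diam (Z : Set Λ))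
          * Real.exp (-μ * Metric.infDist i (Y : Set Λ)) := by
        have hterm : ∀ j ∈ Z, Real.exp (-μ * Metric.infDist j (Y : Set Λ))
            ≤ Real.exp (μ * Metric.diam (Z : Set Λ))
              * Real.exp (-μ * Metric.infDist i (Y : Set Λ)) := by
          intro j hj
          rw [← Real.exp_add]
          apply Real.exp_le_exp.mpr
          have h1 : Metric.infDist i (Y : Set Λ) ≤ Metric.infDist j (Y : Set Λ) + dist i j :=
            Metric.infDist_le_infDist_add_dist
          have h2 : dist i j ≤ Metric.diam (Z : Set Λ) :=
            Metric.dist_le_diam_of_mem hbd hiZ hj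
          nlinarith [hμ.le]
        calc Fsum μ Y Z = ∑ j ∈ Z, Real.exp (-μ * Metric.infDist j (Y : Set Λ)) := rfl
          _ ≤ ∑ _j ∈ Z, Real.exp (μ * Metric.diam (Z : Set Λ))
              * Real.exp (-μ * Metric.infDist i (Y : Set Λ)) := Finset.sum_le_sum hterm
          _ = (Z.card : ℝ) * Real.exp (μ * Metric.diam (Z : Set Λ))
              * Real.exp (-μ * Metric.infDist i (Y : Set Λ)) := by
            rw [Finset.sum_const, nsmul_eq_mul, mul_assoc]
      have hterm2 : w Z * Fsum μ Y Z
          ≤ w Z * (Z.card : ℝ) * Real.exp (μ * Metric.diam (Z : Set Λ))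
            * Real.exp (-μ * Metric.infDist i (Y : Set Λ)) := by
        calc w Z * Fsum μ Y Z ≤ w Z * ((Z.card : ℝ) * Real.exp (μ * Metric.diam (Z : Set Λ))
              * Real.exp (-μ * Metric.infDist i (Y : Set Λ))) :=
            mul_le_mul_of_nonneg_left hFZ (hw Z)
          _ = _ := by ring
      refine hterm2.trans ?_
      refine Finset.single_le_sum (f := fun i => w Z * (Z.card : ℝ)
        * Real.exp (μ * Metric.diam (Z : Set Λ))
        * Real.exp (-μ * Metric.infDist i (Y : Set Λ)))
        (fun j _ => ?_) (Finset.mem_inter.mpr ⟨hiX, hiZ⟩)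
      have := hw Z
      positivity
    · refine Finset.sum_nonneg fun j _ => ?_
      have := hw Z
      positivity
  calc ∑ Z : Finset Λ, (if (Z ∩ X).Nonempty then w Z * Fsum μ Y Z else 0)
      ≤ ∑ Z : Finset Λ, ∑ i ∈ X ∩ Z, w Z * (Z.card : ℝ)
          * Real.exp (μ * Metric.diam (Z : Set Λ))
          * Real.exp (-μ * Metric.infDist i (Y : Set Λ)) :=
        Finset.sum_le_sum fun Z _ => step1 Z
    _ = ∑ i ∈ X, ∑ Z ∈ Finset.univ.filter (fun Z : Finset Λ => i ∈ Z),
          w Z * (Z.card : ℝ) * Real.exp (μ * Metric.diam (Z : Set Λ))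
          * Real.exp (-μ * Metric.infDist i (Y : Set Λ)) := by
        have hXZ : ∀ Z : Finset Λ, X ∩ Z = X.filter (fun i => i ∈ Z) := by
          intro Z; ext i; simp [Finset.mem_inter, Finset.mem_filter]
        simp_rw [hXZ, Finset.sum_filter]
        rw [Finset.sum_comm]
    _ ≤ ∑ i ∈ X, s * Real.exp (-μ * Metric.infDist i (Y : Set Λ)) := by
        refine Finset.sum_le_sum fun i _ => ?_
        rw [← Finset.sum_mul]
        exact mul_le_mul_of_nonneg_right (hdecay i) (Real.exp_pos _).le
    _ = s * Fsum μ Y X := by rw [Fsum, Finset.mul_sum]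

omit [MetricSpace Λ] in
lemma chainSum_zero (w : Finset Λ → ℝ) (X Y : Finset Λ) :
    chainSum w X Y 0
      = ∑ Z : Finset Λ, if (Z ∩ X).Nonempty ∧ (Z ∩ Y).Nonempty then w Z else 0 := by
  rw [chainSum]
  refine Fintype.sum_equiv (Equiv.funUnique (Fin 1) (Finset Λ)) _ _ fun Z => ?_
  have : Fin.last 0 = (0 : Fin 1) := rfl
  simp [this, Fin.prod_univ_one]

omit [MetricSpace Λ] in
lemma chainSum_rec (w : Finset Λ → ℝ) (X Y : Finset Λ) (k : ℕ) :
    chainSum w X Y (k + 1)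
      = ∑ Z₀ : Finset Λ, if (Z₀ ∩ X).Nonempty then w Z₀ * chainSum w Z₀ Y k else 0 := by
  rw [chainSum]
  rw [← (Fin.consEquiv (fun _ : Fin (k + 2) => Finset Λ)).sum_comp]
  rw [Fintype.sum_prod_type]
  refine Finset.sum_congr rfl fun Z₀ _ => ?_
  rw [chainSum, Finset.mul_sum]
  by_cases h0 : (Z₀ ∩ X).Nonempty
  · simp only [h0, if_true]
    refine Finset.sum_congr rfl fun Z' _ => ?_
    have e2 : ∀ j : Fin (k + 1),
        (Fin.cons Z₀ Z' : Fin (k + 2) → Finset Λ) j.succ = Z' j := fun j => Fin.cons_succ _ _ _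
    have e3 : ∀ i : Fin k,
        (Fin.cons Z₀ Z' : Fin (k + 2) → Finset Λ) ((i.succ).castSucc) = Z' i.castSucc := by
      intro i
      rw [← Fin.succ_castSucc]
      exact Fin.cons_succ _ _ _
    have e4 : (Fin.cons Z₀ Z' : Fin (k + 2) → Finset Λ) (Fin.last (k + 1)) = Z' (Fin.last k) := by
      rw [← Fin.succ_last]
      exact Fin.cons_succ _ _ _
    have hcond : (((Fin.cons Z₀ Z' : Fin (k + 2) → Finset Λ) 0 ∩ X).Nonempty ∧
        (∀ j : Fin (k + 1), ((Fin.cons Z₀ Z' : Fin (k + 2) → Finset Λ) j.castSucc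
          ∩ (Fin.cons Z₀ Z' : Fin (k + 2) → Finset Λ) j.succ).Nonempty) ∧
        ((Fin.cons Z₀ Z' : Fin (k + 2) → Finset Λ) (Fin.last (k + 1)) ∩ Y).Nonempty) ↔
        ((Z' 0 ∩ Z₀).Nonempty ∧
          (∀ j : Fin k, (Z' j.castSucc ∩ Z' j.succ).Nonempty) ∧
          (Z' (Fin.last k) ∩ Y).Nonempty) := by
      rw [Fin.forall_fin_succ]
      have e1 : (Fin.cons Z₀ Z' : Fin (k + 2) → Finset Λ) ((0 : Fin (k+1)).castSucc) = Z₀ := by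
        simp
      simp only [e1, e2, e3, e4, Fin.cons_zero]
      constructor
      · rintro ⟨_hX, ⟨hc0, hrest⟩, hYc⟩
        exact ⟨by rwa [Finset.inter_comm], hrest, hYc⟩
      · rintro ⟨hc0, hrest, hYc⟩
        exact ⟨h0, ⟨by rwa [Finset.inter_comm], hrest⟩, hYc⟩
    have hprod : (∏ j : Fin (k + 2), w ((Fin.cons Z₀ Z' : Fin (k + 2) → Finset Λ) j))
        = w Z₀ * ∏ j : Fin (k + 1), w (Z' j) := by
      rw [Fin.prod_univ_succ]
      simp
    simp only [Fin.consEquiv_apply]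
    rw [hprod]
    split_ifs with h1 h2
    · rfl
    · exact absurd (hcond.mp h1) h2
    · exact absurd (hcond.mpr (by assumption)) h1
    · rw [mul_zero]
  · simp only [h0, if_false]
    refine Finset.sum_eq_zero fun Z' _ => ?_
    simp only [Fin.consEquiv_apply]
    rw [if_neg]
    rintro ⟨hc, _, _⟩
    rw [Fin.cons_zero] at hc
    exact h0 hc

set_option maxHeartbeats 1000000 in
lemma chainSum_le (w : Finset Λ → ℝ) (hw : ∀ Z, 0 ≤ w Z) (μ s : ℝ) (hμ : 0 < μ) (hs : 0 < s)
    (hdecay : ∀ i : Λ, ∑ Z ∈ Finset.univ.filter (fun Z : Finset Λ => i ∈ Z),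
        w Z * (Z.card : ℝ) * Real.exp (μ * Metric.diam (Z : Set Λ)) ≤ s)
    (Y : Finset Λ) (hY : Y.Nonempty) (k : ℕ) :
    ∀ X : Finset Λ, chainSum w X Y k ≤ s ^ (k + 1) * Fsum μ Y X := by
  induction k with
  | zero =>
    intro X
    rw [pow_one, chainSum_zero]
    refine le_trans (Finset.sum_le_sum fun Z _ => ?_) (key_step w hw μ s hμ hdecay X Y)
    split_ifs with h1 h2
    · obtain ⟨_, j, hj⟩ := h1
      have hjZ : j ∈ Z := (Finset.mem_inter.mp hj).1
      have hjY : j ∈ Y := (Finset.mem_inter.mp hj).2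
      have h1le : (1 : ℝ) ≤ Fsum μ Y Z := by
        have hz : Real.exp (-μ * Metric.infDist j (Y : Set Λ)) = 1 := by
          rw [Metric.infDist_zero_of_mem (by exact_mod_cast hjY), mul_zero, Real.exp_zero]
        calc (1 : ℝ) = Real.exp (-μ * Metric.infDist j (Y : Set Λ)) := hz.symm
          _ ≤ Fsum μ Y Z := Finset.single_le_sum
              (f := fun i => Real.exp (-μ * Metric.infDist i (Y : Set Λ)))
              (fun i _ => (Real.exp_pos _).le) hjZ
      calc w Z = w Z * 1 := (mul_one _).symm
        _ ≤ w Z * Fsum μ Y Z := mul_le_mul_of_nonneg_left h1le (hw Z)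
    · exact absurd h1.1 h2
    · exact mul_nonneg (hw Z) (Fsum_nonneg _ _ _)
    · exact le_rfl
  | succ k ih =>
    intro X
    rw [chainSum_rec]
    calc ∑ Z₀ : Finset Λ, (if (Z₀ ∩ X).Nonempty then w Z₀ * chainSum w Z₀ Y k else 0)
        ≤ ∑ Z₀ : Finset Λ,
            (if (Z₀ ∩ X).Nonempty then w Z₀ * (s ^ (k + 1) * Fsum μ Y Z₀) else 0) := by
          refine Finset.sum_le_sum fun Z₀ _ => ?_
          split_ifs with h
          · exact mul_le_mul_of_nonneg_left (ih Z₀) (hw Z₀)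
          · exact le_rfl
      _ = s ^ (k + 1) * ∑ Z₀ : Finset Λ, (if (Z₀ ∩ X).Nonempty then w Z₀ * Fsum μ Y Z₀ else 0) := by
          rw [Finset.mul_sum]
          refine Finset.sum_congr rfl fun Z₀ _ => ?_
          split_ifs with h
          · ring
          · rw [mul_zero]
      _ ≤ s ^ (k + 1) * (s * Fsum μ Y X) :=
          mul_le_mul_of_nonneg_left (key_step w hw μ s hμ hdecay X Y) (by positivity)
      _ = s ^ (k + 1 + 1) * Fsum μ Y X := by ring

end aux

/-- The combinatorial chain-sum estimate: if `∑_{Z∋i} w(Z) |Z| e^{μ diam Z} ≤ s` for every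
site `i`, then for nonempty `X, Y` and every integer `k ≥ 1` (here written as `k+1` with
`k : ℕ`), the weighted sum over chains `(Z₁,…,Z_{k+1})` connecting `X` to `Y` is at most
`s^{k+1} ∑_{i∈X} e^{−μ dist(i,Y)}`. -/
theorem stmt_5 {Λ : Type} [Fintype Λ] [DecidableEq Λ] [MetricSpace Λ]
    (w : Finset Λ → ℝ) (hw : ∀ Z, 0 ≤ w Z)
    (μ s : ℝ) (hμ : 0 < μ) (hs : 0 < s)
    (hdecay : ∀ i : Λ, ∑ Z ∈ Finset.univ.filter (fun Z : Finset Λ => i ∈ Z),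
        w Z * (Z.card : ℝ) * Real.exp (μ * Metric.diam (Z : Set Λ)) ≤ s)
    (X Y : Finset Λ) (hX : X.Nonempty) (hY : Y.Nonempty) (k : ℕ) :
    chainSum w X Y k ≤ s ^ (k + 1) * ∑ i ∈ X, Real.exp (-μ * Metric.infDist i (Y : Set Λ)) := by
  exact chainSum_le w hw μ s hμ hs hdecay Y hY k X
end

section
/- Let L ≥ 2 be an integer and index by j ∈ ℤ/L. Let T be a unitary n×n complex matrix with T^L = I. Let (q_j)_{j∈ℤ/L} be pairwise commuting Hermitian n×n matrices whose spectra are contained in ℤ, with T q_j T^{−1} = q_{j+1} for all j. Set Q = Σ_{j∈ℤ/L} q_j and A = Σ_{j=0}^{L−1} 2π·(j/L)·q_j. Suppose ψ₀ ∈ ℂⁿ is a unit vector with T ψ₀ = z ψ₀ for some z ∈ ℂ with |z| = 1, and Q ψ₀ = q̄ ψ₀ for some q̄ ∈ ℝ. Then the vector Φ = e^{iA} ψ₀ satisfies T Φ = z·e^{−2πi q̄ / L}·Φ; in particular, if q̄/L is not an integer, then ⟨ψ₀, Φ⟩ = 0. -/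
open scoped Matrix
open NormedSpace

lemma exp_mulVec_eig {n : ℕ} (M : Matrix (Fin n) (Fin n) ℂ) (ψ : Fin n → ℂ) (c : ℂ)
    (h : M.mulVec ψ = c • ψ) :
    (exp M).mulVec ψ = Complex.exp c • ψ := by
  letI : NormedRing (Matrix (Fin n) (Fin n) ℂ) := Matrix.linftyOpNormedRing
  letI : NormedAlgebra ℂ (Matrix (Fin n) (Fin n) ℂ) := Matrix.linftyOpNormedAlgebra
  have hpow : ∀ k : ℕ, (M ^ k).mulVec ψ = c ^ k • ψ := by
    intro k; induction k with
    | zero => simp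
    | succ k ih =>
      rw [pow_succ, ← Matrix.mulVec_mulVec, h, Matrix.mulVec_smul, ih, smul_smul, ← pow_succ']
  let f : Matrix (Fin n) (Fin n) ℂ →ₗ[ℂ] (Fin n → ℂ) :=
    { toFun := fun A => A.mulVec ψ
      map_add' := fun A B => Matrix.add_mulVec A B ψ
      map_smul' := fun r A => Matrix.smul_mulVec r A ψ }
  let F : Matrix (Fin n) (Fin n) ℂ →L[ℂ] (Fin n → ℂ) := LinearMap.toContinuousLinearMap f
  have hsum := expSeries_summable' (𝕂 := ℂ) M
  have hstep : (exp M).mulVec ψ = F (∑' k : ℕ, ((k.factorial : ℂ))⁻¹ • M ^ k) := by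
    rw [exp_eq_tsum (𝕂 := ℂ)]; rfl
  rw [hstep, F.map_tsum hsum]
  have : ∀ k : ℕ, F (((k.factorial : ℂ))⁻¹ • M ^ k) = (((k.factorial : ℂ))⁻¹ * c ^ k) • ψ := by
    intro k
    show (((k.factorial : ℂ))⁻¹ • M ^ k).mulVec ψ = _
    rw [Matrix.smul_mulVec, hpow, smul_smul]
  simp_rw [this]
  have hsc : Summable fun k : ℕ => ((k.factorial : ℂ))⁻¹ * c ^ k := by
    simpa [smul_eq_mul] using expSeries_summable' (𝕂 := ℂ) c
  rw [hsc.tsum_smul_const]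
  congr 1
  rw [Complex.exp_eq_exp_ℂ, exp_eq_tsum (𝕂 := ℂ)]
  simp [smul_eq_mul]

lemma exp_conj_one {n : ℕ} (V W M : Matrix (Fin n) (Fin n) ℂ)
    (h1 : V * W = 1) (h2 : W * V = 1) :
    exp (V * M * W) = V * exp M * W :=
  Matrix.exp_units_conj (⟨V, W, h1, h2⟩ : (Matrix (Fin n) (Fin n) ℂ)ˣ) M

lemma exp_int_herm {n : ℕ} (A : Matrix (Fin n) (Fin n) ℂ) (hA : A.IsHermitian)
    (hint : spectrum ℂ A ⊆ Set.range ((↑) : ℤ → ℂ)) :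
    exp (((2 * Real.pi : ℝ) * Complex.I) • A) = 1 := by
  have hspec := hA.spectral_theorem
  set U : Matrix (Fin n) (Fin n) ℂ := (Matrix.IsHermitian.eigenvectorUnitary hA : Matrix (Fin n) (Fin n) ℂ) with hU
  have h1 : U * star U = 1 := Matrix.mem_unitaryGroup_iff.mp (Matrix.IsHermitian.eigenvectorUnitary hA).2
  have h2 : star U * U = 1 := Matrix.mem_unitaryGroup_iff'.mp (Matrix.IsHermitian.eigenvectorUnitary hA).2
  have key : (((2 * Real.pi : ℝ) * Complex.I) • A) =
      U * (((2 * Real.pi : ℝ) * Complex.I) • Matrix.diagonal (RCLike.ofReal ∘ hA.eigenvalues)) * star U := by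
    rw [Matrix.mul_smul, Matrix.smul_mul]
    conv_lhs => rw [hspec]
    rfl
  rw [key, exp_conj_one U (star U) _ h1 h2]
  have hdiag : (((2 * Real.pi : ℝ) * Complex.I) • Matrix.diagonal (RCLike.ofReal ∘ hA.eigenvalues))
      = Matrix.diagonal (fun i => ((2 * Real.pi : ℝ) * Complex.I) * (hA.eigenvalues i : ℂ)) := by
    rw [← Matrix.diagonal_smul]; rfl
  rw [hdiag, Matrix.exp_diagonal]
  have hone : (exp fun i => ((2 * Real.pi : ℝ) * Complex.I) * (hA.eigenvalues i : ℂ)) = fun _ : Fin n => (1:ℂ) := by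
    rw [Pi.exp_def]
    funext i
    have hmem : ((hA.eigenvalues i : ℝ) : ℂ) ∈ spectrum ℂ A :=
      spectrum.algebraMap_mem ℂ (hA.eigenvalues_mem_spectrum_real i)
    obtain ⟨m, hm⟩ := hint hmem
    rw [← Complex.exp_eq_exp_ℂ, ← hm]
    rw [show ((2 * Real.pi : ℝ) * Complex.I) * (m : ℂ) = (m : ℂ) * (2 * (Real.pi:ℂ) * Complex.I) by push_cast; ring]
    exact Complex.exp_int_mul_two_pi_mul_I m
  rw [hone, Matrix.diagonal_one, mul_one, h1]

/-- The twisted variational state of the Lieb-Schultz-Mattis argument: with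
`A = ∑_{j=0}^{L−1} 2π (j/L) q_j` and `Φ = e^{iA} ψ₀`, if `T ψ₀ = z ψ₀` and `Q ψ₀ = q̄ ψ₀`
then `T Φ = z e^{−2πi q̄/L} Φ`; in particular `⟨ψ₀, Φ⟩ = 0` when `q̄/L ∉ ℤ`. -/
theorem stmt_11 {L n : ℕ} [NeZero L] (hL : 2 ≤ L)
    (T : Matrix (Fin n) (Fin n) ℂ)
    (hT1 : T * Tᴴ = 1) (hT2 : Tᴴ * T = 1) (hTL : T ^ L = 1)
    (q : ZMod L → Matrix (Fin n) (Fin n) ℂ)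
    (hherm : ∀ j, (q j).IsHermitian)
    (hcomm : ∀ j k, q j * q k = q k * q j)
    (hint : ∀ j, spectrum ℂ (q j) ⊆ Set.range ((↑) : ℤ → ℂ))
    (htrans : ∀ j, T * q j * Tᴴ = q (j + 1))
    (ψ₀ : Fin n → ℂ) (hunit : star ψ₀ ⬝ᵥ ψ₀ = 1)
    (z : ℂ) (hz : ‖z‖ = 1) (hTψ : T.mulVec ψ₀ = z • ψ₀)
    (qbar : ℝ) (hQψ : (∑ j, q j).mulVec ψ₀ = (qbar : ℂ) • ψ₀)
    (Φ : Fin n → ℂ)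
    (hΦ : Φ = (NormedSpace.exp (Complex.I •
        ∑ j : Fin L, ((2 * Real.pi * (j : ℝ) / (L : ℝ) : ℝ) : ℂ) • q ((j : ℕ) : ZMod L))).mulVec
      ψ₀) :
    T.mulVec Φ =
        (z * Complex.exp (-(2 * (Real.pi : ℂ) * Complex.I * (qbar : ℂ) / (L : ℂ)))) • Φ ∧
      ((∀ m : ℤ, qbar / (L : ℝ) ≠ (m : ℝ)) → star ψ₀ ⬝ᵥ Φ = 0) := by
  classical
  obtain ⟨m, rfl⟩ : ∃ m, L = m + 1 := ⟨L - 1, by omega⟩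
  have hLR : ((m + 1 : ℕ) : ℝ) ≠ 0 := by positivity
  have hLC : ((m + 1 : ℕ) : ℂ) ≠ 0 := Nat.cast_ne_zero.mpr (by omega)
  have hm1 : (m : ℂ) + 1 ≠ 0 := by push_cast at hLC; exact hLC
  set c : ℕ → ℂ := fun j => ((2 * Real.pi * (j : ℝ) / ((m + 1 : ℕ) : ℝ) : ℝ) : ℂ) with hcdef
  set p : ℂ := ((2 * Real.pi : ℝ) : ℂ) with hpdef
  set B : Matrix (Fin n) (Fin n) ℂ := ∑ j ∈ Finset.range (m + 1), c j • q ((j : ℕ) : ZMod (m + 1)) with hBdef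
  set Qm : Matrix (Fin n) (Fin n) ℂ := ∑ j : ZMod (m + 1), q j with hQmdef
  set X : Matrix (Fin n) (Fin n) ℂ := Complex.I • B with hXdef
  set Y : Matrix (Fin n) (Fin n) ℂ := (-(p * Complex.I) / ((m + 1 : ℕ) : ℂ)) • Qm with hYdef
  set Z : Matrix (Fin n) (Fin n) ℂ := (p * Complex.I) • q 0 with hZdef
  -- the statement sum equals B
  have hB : (∑ j : Fin (m + 1),
      ((2 * Real.pi * (j : ℝ) / ((m + 1 : ℕ) : ℝ) : ℝ) : ℂ) • q ((j : ℕ) : ZMod (m + 1))) = B :=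
    Fin.sum_univ_eq_sum_range (fun j => c j • q ((j : ℕ) : ZMod (m + 1))) (m + 1)
  rw [hB] at hΦ
  -- range sum of q equals Qm
  have hbij : Function.Bijective (fun i : Fin (m + 1) => ((i : ℕ) : ZMod (m + 1))) := by
    constructor
    · intro a b hab
      have h := congrArg ZMod.val hab
      rw [ZMod.val_cast_of_lt a.isLt, ZMod.val_cast_of_lt b.isLt] at h
      exact Fin.ext h
    · intro j
      exact ⟨⟨j.val, j.val_lt⟩, ZMod.natCast_rightInverse j⟩
  have hrQ : ∑ j ∈ Finset.range (m + 1), q ((j : ℕ) : ZMod (m + 1)) = Qm := by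
    rw [← Fin.sum_univ_eq_sum_range (fun j => q ((j : ℕ) : ZMod (m + 1))) (m + 1)]
    exact Fintype.sum_bijective _ hbij _ _ (fun i => rfl)
  -- scalar helper facts
  have hd1 : ∀ j : ℕ, c (j + 1) - p / ((m + 1 : ℕ) : ℂ) = c j := by
    intro j
    rw [hcdef, hpdef]
    push_cast
    field_simp [hm1]
    ring
  have hd0 : (0 : ℂ) - p / ((m + 1 : ℕ) : ℂ) + p = c m := by
    rw [hcdef, hpdef]
    push_cast
    field_simp [hm1]
    ring
  -- the key reindexing identity
  have hkey : (∑ j ∈ Finset.range (m + 1), c j • q (((j : ℕ) : ZMod (m + 1)) + 1))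
      = B + (-p / ((m + 1 : ℕ) : ℂ)) • Qm + p • q 0 := by
    have hstep1 : (∑ j ∈ Finset.range (m + 1), c j • q (((j : ℕ) : ZMod (m + 1)) + 1))
        = ∑ k ∈ Finset.range (m + 1),
          ((c k - p / ((m + 1 : ℕ) : ℂ) + if k = 0 then p else 0) • q ((k : ℕ) : ZMod (m + 1))) := by
      rw [Finset.sum_range_succ, Finset.sum_range_succ']
      congr 1
      · apply Finset.sum_congr rfl
        intro j hj
        have h1 : (((j + 1 : ℕ)) : ZMod (m + 1)) = ((j : ℕ) : ZMod (m + 1)) + 1 := by push_cast; ring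
        rw [h1, if_neg (Nat.succ_ne_zero j), add_zero, hd1 j]
      · have h2 : (((m : ℕ) : ZMod (m + 1)) + 1) = ((0 : ℕ) : ZMod (m + 1)) := by
          have : (((m + 1 : ℕ)) : ZMod (m + 1)) = 0 := ZMod.natCast_self (m + 1)
          push_cast at this ⊢
          rw [this]
        rw [h2, if_pos rfl]
        have hc0 : c 0 = 0 := by rw [hcdef]; push_cast; simp
        rw [hc0, hd0]
    rw [hstep1]
    have hexpand : ∀ k ∈ Finset.range (m + 1),
        (c k - p / ((m + 1 : ℕ) : ℂ) + if k = 0 then p else 0) • q ((k : ℕ) : ZMod (m + 1))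
        = c k • q ((k : ℕ) : ZMod (m + 1)) - (p / ((m + 1 : ℕ) : ℂ)) • q ((k : ℕ) : ZMod (m + 1))
          + (if k = 0 then p else 0) • q ((k : ℕ) : ZMod (m + 1)) := by
      intro k _
      rw [add_smul, sub_smul]
    rw [Finset.sum_congr rfl hexpand, Finset.sum_add_distrib, Finset.sum_sub_distrib,
      ← Finset.smul_sum, hrQ]
    have hif : (∑ k ∈ Finset.range (m + 1),
        (if k = 0 then p else 0) • q ((k : ℕ) : ZMod (m + 1))) = p • q 0 := by
      rw [Finset.sum_eq_single_of_mem 0 (Finset.mem_range.mpr (by omega))]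
      · simp
      · intro k _ hk
        rw [if_neg hk, zero_smul]
    rw [hif, ← hBdef]
    have : (-p / ((m + 1 : ℕ) : ℂ)) • Qm = -((p / ((m + 1 : ℕ) : ℂ)) • Qm) := by
      rw [neg_div, neg_smul]
    rw [this]
    abel
  -- conjugation of B
  have hconjB : T * B * Tᴴ = ∑ j ∈ Finset.range (m + 1), c j • q (((j : ℕ) : ZMod (m + 1)) + 1) := by
    rw [hBdef, Finset.mul_sum, Finset.sum_mul]
    apply Finset.sum_congr rfl
    intro j _
    rw [Matrix.mul_smul, Matrix.smul_mul, htrans]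
  have hsplit : T * X * Tᴴ = X + Y + Z := by
    have hXc : T * X * Tᴴ = Complex.I • (T * B * Tᴴ) := by
      rw [hXdef, Matrix.mul_smul, Matrix.smul_mul]
    rw [hXc, hconjB, hkey, hXdef, hYdef, hZdef]
    module
  -- commutation
  have hBq : ∀ k, Commute B (q k) := by
    intro k
    apply Commute.sum_left
    intro j _
    exact Commute.smul_left (hcomm _ k) _
  have hXY : Commute X Y := by
    apply Commute.smul_left
    apply Commute.smul_right
    apply Commute.sum_right
    intro k _
    exact hBq k
  have hXZ : Commute X Z := ((hBq 0).smul_left _).smul_right _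
  have hYZ : Commute Y Z := by
    apply Commute.smul_left
    apply Commute.smul_right
    apply Commute.sum_left
    intro j _
    exact hcomm j 0
  -- exp identities
  have hexpZ : NormedSpace.exp Z = 1 := by
    rw [hZdef, hpdef]
    exact exp_int_herm (q 0) (hherm 0) (hint 0)
  have hTexp : T * NormedSpace.exp X * Tᴴ = NormedSpace.exp X * NormedSpace.exp Y := by
    rw [← exp_conj_one T Tᴴ X hT1 hT2, hsplit,
      Matrix.exp_add_of_commute _ _ (hXZ.add_left hYZ),
      Matrix.exp_add_of_commute _ _ hXY, hexpZ, mul_one]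
  -- main eigen computation
  rw [← hXdef] at hΦ
  have hTX : T * NormedSpace.exp X = NormedSpace.exp X * NormedSpace.exp Y * T := by
    calc T * NormedSpace.exp X = T * NormedSpace.exp X * (Tᴴ * T) := by rw [hT2, mul_one]
      _ = (T * NormedSpace.exp X * Tᴴ) * T := by rw [← mul_assoc]
      _ = NormedSpace.exp X * NormedSpace.exp Y * T := by rw [hTexp]
  have hYψ : Y.mulVec ψ₀ = ((-(p * Complex.I) / ((m + 1 : ℕ) : ℂ)) * qbar) • ψ₀ := by
    rw [hYdef, Matrix.smul_mulVec, hQψ, smul_smul]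
  have hexpY : (NormedSpace.exp Y).mulVec ψ₀
      = Complex.exp ((-(p * Complex.I) / ((m + 1 : ℕ) : ℂ)) * qbar) • ψ₀ :=
    exp_mulVec_eig Y ψ₀ _ hYψ
  have hsc : Complex.exp ((-(p * Complex.I) / ((m + 1 : ℕ) : ℂ)) * qbar)
      = Complex.exp (-(2 * (Real.pi : ℂ) * Complex.I * (qbar : ℂ) / ((m + 1 : ℕ) : ℂ))) := by
    congr 1
    rw [hpdef]
    push_cast
    ring
  have hmain : T.mulVec Φ
      = (z * Complex.exp (-(2 * (Real.pi : ℂ) * Complex.I * (qbar : ℂ) / ((m + 1 : ℕ) : ℂ)))) • Φ := by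
    rw [hΦ, Matrix.mulVec_mulVec, hTX, ← Matrix.mulVec_mulVec, ← Matrix.mulVec_mulVec, hTψ,
      Matrix.mulVec_smul, hexpY, hsc]
    simp only [Matrix.mulVec_smul]
    module
  refine ⟨hmain, fun hnint => ?_⟩
  set w : ℂ := Complex.exp (-(2 * (Real.pi : ℂ) * Complex.I * (qbar : ℂ) / ((m + 1 : ℕ) : ℂ))) with hwdef
  have hz0 : z ≠ 0 := by
    intro h; rw [h] at hz; simp at hz
  have h1 : star ψ₀ ⬝ᵥ (T *ᵥ Φ) = (z * w) * (star ψ₀ ⬝ᵥ Φ) := by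
    rw [hmain, dotProduct_smul, smul_eq_mul]
  have hTs : Tᴴ *ᵥ ψ₀ = z⁻¹ • ψ₀ := by
    have h2 : Tᴴ *ᵥ (T *ᵥ ψ₀) = ψ₀ := by rw [Matrix.mulVec_mulVec, hT2, Matrix.one_mulVec]
    rw [hTψ, Matrix.mulVec_smul] at h2
    calc Tᴴ *ᵥ ψ₀ = z⁻¹ • (z • (Tᴴ *ᵥ ψ₀)) := by rw [smul_smul, inv_mul_cancel₀ hz0, one_smul]
      _ = z⁻¹ • ψ₀ := by rw [h2]
  have hcz : (starRingEnd ℂ) z = z⁻¹ := by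
    apply eq_inv_of_mul_eq_one_right
    rw [Complex.mul_conj]
    norm_cast
    rw [Complex.normSq_eq_norm_sq, hz, one_pow]
  have hstz : star (z⁻¹) = z := by
    have : star (z⁻¹) = (star z)⁻¹ := star_inv₀ z
    rw [this]
    show ((starRingEnd ℂ) z)⁻¹ = z
    rw [hcz, inv_inv]
  have h2' : star ψ₀ ⬝ᵥ (T *ᵥ Φ) = z * (star ψ₀ ⬝ᵥ Φ) := by
    rw [Matrix.dotProduct_mulVec]
    have hvm : star ψ₀ ᵥ* T = star (Tᴴ *ᵥ ψ₀) := by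
      rw [Matrix.star_mulVec, Matrix.conjTranspose_conjTranspose]
    rw [hvm, hTs, star_smul, smul_dotProduct, hstz, smul_eq_mul]
  by_contra hs0
  have heq : (z * w) * (star ψ₀ ⬝ᵥ Φ) = z * (star ψ₀ ⬝ᵥ Φ) := by rw [← h1, h2']
  have hw1 : w = 1 := by
    have h3 : z * (w * (star ψ₀ ⬝ᵥ Φ)) = z * (1 * (star ψ₀ ⬝ᵥ Φ)) := by
      linear_combination heq
    have h4 := mul_left_cancel₀ hz0 h3
    exact mul_right_cancel₀ hs0 (by linear_combination h4)
  rw [hwdef, Complex.exp_eq_one_iff] at hw1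
  obtain ⟨k, hk⟩ := hw1
  have hπ : (Real.pi : ℂ) ≠ 0 := by exact_mod_cast Real.pi_ne_zero
  have hq : (qbar : ℂ) = -k * ((m + 1 : ℕ) : ℂ) := by
    field_simp at hk
    have hne : (2 * (Real.pi : ℂ) * Complex.I) ≠ 0 := by
      simp [Real.pi_ne_zero, Complex.I_ne_zero, Complex.ofReal_ne_zero]
    apply mul_left_cancel₀ hne
    push_cast at hk ⊢
    linear_combination (-(2 * (Real.pi : ℂ) * Complex.I)) * hk
  have hqR : qbar = ((-k : ℤ) : ℝ) * ((m + 1 : ℕ) : ℝ) := by exact_mod_cast hq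
  have : qbar / ((m + 1 : ℕ) : ℝ) = ((-k : ℤ) : ℝ) := by
    rw [hqR]
    field_simp
  exact hnint (-k) this
end

section
/- Let A be a Hermitian n×n complex matrix and let h be any n×n complex matrix. Then ‖ (e^{iA} h e^{−iA} + e^{−iA} h e^{iA})/2 − h ‖ ≤ (1/2)·‖[[h, A], A]‖. -/
open NormedSpace Set

section Abstract

variable {𝔸 : Type*} [NormedRing 𝔸] [StarRing 𝔸] [CStarRing 𝔸] [CompleteSpace 𝔸]
  [NormedAlgebra ℂ 𝔸] [StarModule ℂ 𝔸]

set_option maxHeartbeats 1000000 in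
lemma lsm_aux (a b : 𝔸) (ha : IsSelfAdjoint a) :
    ‖(2 : ℂ)⁻¹ • (exp (Complex.I • a) * b * exp (-(Complex.I • a)) +
        exp (-(Complex.I • a)) * b * exp (Complex.I • a)) - b‖ ≤
      (1 / 2) * ‖(b * a - a * b) * a - a * (b * a - a * b)‖ := by
  letI : NormedAlgebra ℚ 𝔸 := NormedAlgebra.restrictScalars ℚ ℂ 𝔸
  rcases subsingleton_or_nontrivial 𝔸 with hs | hnt
  · have h0 : ∀ x : 𝔸, ‖x‖ = 0 := fun x => by rw [Subsingleton.elim x 0, norm_zero]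
    rw [h0, h0]; norm_num
  set c : 𝔸 := Complex.I • a with hc_def
  set e : ℝ → 𝔸 := fun t => exp (t • c) with he_def
  have he : ∀ t : ℝ, HasDerivAt e (e t * c) t := fun t => hasDerivAt_exp_smul_const c t
  have hcomm : ∀ s : ℝ, c * e s = e s * c :=
    fun s => (((Commute.refl c).smul_right s).exp_right).eq
  have hstarc : star c = -c := by
    rw [hc_def, star_smul, ha.star_eq, Complex.star_def, Complex.conj_I, neg_smul]
  have hsc : ∀ t : ℝ, star (t • c) = (-t) • c := by
    intro t
    rw [star_smul, star_trivial, hstarc, smul_neg, ← neg_smul]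
  have hmul : ∀ s t : ℝ, e s * e t = e (s + t) := by
    intro s t
    rw [he_def]
    simp only []
    rw [← exp_add_of_commute (((Commute.refl c).smul_left s).smul_right t), add_smul]
  have he0 : e (0 : ℝ) = 1 := by simp [he_def, exp_zero]
  have hstar : ∀ t : ℝ, star (e t) = e (-t) := by
    intro t
    rw [he_def]
    simp only []
    rw [star_exp, hsc]
  have hunit : ∀ t : ℝ, e t ∈ unitary 𝔸 := by
    intro t
    rw [Unitary.mem_iff]
    constructor
    · rw [hstar, hmul]; simp [he0]
    · rw [hstar, hmul]; simp [he0]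
  have hne : ∀ t : ℝ, ‖e t‖ = 1 := fun t => CStarRing.norm_of_mem_unitary (hunit t)
  have hconj : ∀ (x : 𝔸) (s t : ℝ), ‖e s * x * e t‖ ≤ ‖x‖ := by
    intro x s t
    calc ‖e s * x * e t‖ ≤ ‖e s * x‖ * ‖e t‖ := norm_mul_le _ _
      _ = ‖e s * x‖ := by rw [hne, mul_one]
      _ ≤ ‖e s‖ * ‖x‖ := norm_mul_le _ _
      _ = ‖x‖ := by rw [hne, one_mul]
  -- derivative of conjugation
  have hder : ∀ (x : 𝔸) (t : ℝ),
      HasDerivAt (fun t : ℝ => e t * x * e (-t)) (e t * (c * x - x * c) * e (-t)) t := by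
    intro x t
    have h2 : HasDerivAt (fun t : ℝ => e (-t)) ((-1 : ℝ) • (e (-t) * c)) t :=
      (he (-t)).scomp t (hasDerivAt_neg t)
    have h3 := ((he t).mul_const x).mul h2
    convert h3 using 1
    · rfl
    rw [neg_one_smul, ← hcomm (-t)]
    noncomm_ring
  have hderneg : ∀ (x : 𝔸) (t : ℝ),
      HasDerivAt (fun t : ℝ => e (-t) * x * e t) (-(e (-t) * (c * x - x * c) * e t)) t := by
    intro x t
    have h1 := (hder x (-t)).scomp t (hasDerivAt_neg t)
    simp only [Function.comp_def, neg_neg, neg_one_smul] at h1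
    exact h1
  set w : 𝔸 := a * b - b * a with hw_def
  have hd2 : c * b - b * c = Complex.I • w := by
    rw [hc_def, hw_def, smul_mul_assoc, mul_smul_comm, smul_sub]
  set N : 𝔸 := (b * a - a * b) * a - a * (b * a - a * b) with hN_def
  have hMN : c * (Complex.I • w) - (Complex.I • w) * c = -N := by
    rw [hc_def, hN_def, hw_def]
    simp only [smul_mul_assoc, mul_smul_comm, smul_smul, Complex.I_mul_I, neg_smul, one_smul]
    noncomm_ring
  have hMnorm : ‖c * (Complex.I • w) - (Complex.I • w) * c‖ = ‖N‖ := by rw [hMN, norm_neg]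
  have hF' : ∀ t : ℝ, HasDerivAt
      (fun t : ℝ => e t * b * e (-t) + e (-t) * b * e t - (b + b))
      (e t * (Complex.I • w) * e (-t) + -(e (-t) * (Complex.I • w) * e t)) t := by
    intro t
    have := ((hder b t).add (hderneg b t)).sub_const (b + b)
    rwa [hd2] at this
  have hF'' : ∀ t : ℝ, HasDerivAt
      (fun t : ℝ => e t * (Complex.I • w) * e (-t) + -(e (-t) * (Complex.I • w) * e t))
      (e t * (c * (Complex.I • w) - (Complex.I • w) * c) * e (-t) +
        -(-(e (-t) * (c * (Complex.I • w) - (Complex.I • w) * c) * e t))) t := by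
    intro t
    exact (hder _ t).add ((hderneg _ t)).neg
  have hF''bound : ∀ t : ℝ,
      ‖e t * (c * (Complex.I • w) - (Complex.I • w) * c) * e (-t) +
        -(-(e (-t) * (c * (Complex.I • w) - (Complex.I • w) * c) * e t))‖ ≤ 2 * ‖N‖ := by
    intro t
    rw [neg_neg]
    calc ‖e t * (c * (Complex.I • w) - (Complex.I • w) * c) * e (-t) +
          e (-t) * (c * (Complex.I • w) - (Complex.I • w) * c) * e t‖
        ≤ ‖e t * (c * (Complex.I • w) - (Complex.I • w) * c) * e (-t)‖ +
          ‖e (-t) * (c * (Complex.I • w) - (Complex.I • w) * c) * e t‖ := norm_add_le _ _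
      _ ≤ ‖c * (Complex.I • w) - (Complex.I • w) * c‖ +
          ‖c * (Complex.I • w) - (Complex.I • w) * c‖ :=
            add_le_add (hconj _ t (-t)) (hconj _ (-t) t)
      _ = 2 * ‖N‖ := by rw [hMnorm]; ring
  have step1 : ∀ x ∈ Icc (0 : ℝ) 1,
      ‖e x * (Complex.I • w) * e (-x) + -(e (-x) * (Complex.I • w) * e x)‖ ≤ 2 * ‖N‖ * x := by
    refine image_norm_le_of_norm_deriv_right_le_deriv_boundary
      ((continuous_iff_continuousAt.mpr fun t => (hF'' t).continuousAt).continuousOn)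
      (fun x _ => (hF'' x).hasDerivWithinAt) ?_ (fun x => ?_) (fun x _ => hF''bound x)
    · simp only [neg_zero]
      simp
    · simpa using (hasDerivAt_id x).const_mul (2 * ‖N‖)
  have step2 : ∀ x ∈ Icc (0 : ℝ) 1,
      ‖e x * b * e (-x) + e (-x) * b * e x - (b + b)‖ ≤ ‖N‖ * x ^ 2 := by
    refine image_norm_le_of_norm_deriv_right_le_deriv_boundary
      ((continuous_iff_continuousAt.mpr fun t => (hF' t).continuousAt).continuousOn)
      (fun x _ => (hF' x).hasDerivWithinAt) ?_ (B' := fun x => 2 * ‖N‖ * x) (fun x => ?_)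
      (fun x hx => step1 x (Ico_subset_Icc_self hx))
    · simp only [neg_zero, he0, one_mul, mul_one]
      simp
    · have := (hasDerivAt_pow 2 x).const_mul ‖N‖
      refine this.congr_deriv ?_
      push_cast
      ring
  have hF1 : ‖e 1 * b * e (-1) + e (-1) * b * e 1 - (b + b)‖ ≤ ‖N‖ := by
    have := step2 1 ⟨zero_le_one, le_refl 1⟩
    simpa using this
  have hexp1 : exp (Complex.I • a) = e 1 := by
    rw [he_def]
    simp only [one_smul]
    rw [← hc_def]
  have hexp2 : exp (-(Complex.I • a)) = e (-1) := by
    rw [he_def]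
    simp only [neg_smul, one_smul]
    rw [← hc_def]
  rw [hexp1, hexp2]
  have hkey : (2 : ℂ)⁻¹ • (e 1 * b * e (-1) + e (-1) * b * e 1) - b =
      (2 : ℂ)⁻¹ • (e 1 * b * e (-1) + e (-1) * b * e 1 - (b + b)) := by
    rw [smul_sub]
    congr 1
    rw [← two_smul ℂ b, smul_smul]
    norm_num
  rw [hkey, norm_smul]
  have h2n : ‖(2 : ℂ)⁻¹‖ = 1 / 2 := by simp
  rw [h2n]
  have h12 : (0:ℝ) ≤ 1/2 := by norm_num
  have := mul_le_mul_of_nonneg_left hF1 h12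
  linarith

end Abstract

section MatrixAux

attribute [local instance] Matrix.linftyOpNormedAddCommGroup Matrix.linftyOpNormedRing
  Matrix.linftyOpNormedAlgebra

set_option maxHeartbeats 1000000 in
theorem stmt_12_aux {n : ℕ} (A h : Matrix (Fin n) (Fin n) ℂ) (hA : A.IsHermitian) :
    opNorm
        ((2 : ℂ)⁻¹ •
            (NormedSpace.exp (Complex.I • A) * h * NormedSpace.exp (-(Complex.I • A)) +
              NormedSpace.exp (-(Complex.I • A)) * h * NormedSpace.exp (Complex.I • A)) -
          h) ≤
      (1 / 2) * opNorm ((h * A - A * h) * A - A * (h * A - A * h)) := by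
  set φ := Matrix.toEuclideanCLM (𝕜 := ℂ) (n := Fin n) with hφ
  let ψ : Matrix (Fin n) (Fin n) ℂ →ₗ[ℂ] (EuclideanSpace ℂ (Fin n) →L[ℂ] EuclideanSpace ℂ (Fin n)) :=
    { toFun := φ, map_add' := map_add φ, map_smul' := map_smul φ }
  letI : NormedAlgebra ℚ (Matrix (Fin n) (Fin n) ℂ) :=
    NormedAlgebra.restrictScalars ℚ ℂ (Matrix (Fin n) (Fin n) ℂ)
  letI : NormedAlgebra ℚ (EuclideanSpace ℂ (Fin n) →L[ℂ] EuclideanSpace ℂ (Fin n)) :=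
    NormedAlgebra.restrictScalars ℚ ℂ (EuclideanSpace ℂ (Fin n) →L[ℂ] EuclideanSpace ℂ (Fin n))
  have hφcont : Continuous φ := ψ.continuous_of_finiteDimensional
  have hmape : ∀ X : Matrix (Fin n) (Fin n) ℂ, φ (exp X) = exp (φ X) :=
    fun X => map_exp φ hφcont X
  have ha' : IsSelfAdjoint (φ A) := by
    rw [IsSelfAdjoint, ← map_star φ, Matrix.star_eq_conjTranspose, hA.eq]
  have key := lsm_aux (φ A) (φ h) ha'
  rw [opNorm, opNorm, ← hφ]
  have hL : φ ((2 : ℂ)⁻¹ •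
        (exp (Complex.I • A) * h * exp (-(Complex.I • A)) +
          exp (-(Complex.I • A)) * h * exp (Complex.I • A)) - h) =
      (2 : ℂ)⁻¹ • (exp (Complex.I • φ A) * φ h * exp (-(Complex.I • φ A)) +
          exp (-(Complex.I • φ A)) * φ h * exp (Complex.I • φ A)) - φ h := by
    rw [map_sub, map_smul, map_add, map_mul, map_mul, map_mul, map_mul, hmape, hmape,
      map_neg, map_smul]
  have hR : φ ((h * A - A * h) * A - A * (h * A - A * h)) =
      (φ h * φ A - φ A * φ h) * φ A - φ A * (φ h * φ A - φ A * φ h) := by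
    rw [map_sub, map_mul, map_mul, map_sub, map_mul, map_mul]
  rw [hL, hR]
  exact key

end MatrixAux

set_option maxHeartbeats 1000000 in
/-- The sign-averaged conjugation estimate: for Hermitian `A`,
`‖(e^{iA} h e^{−iA} + e^{−iA} h e^{iA})/2 − h‖ ≤ (1/2) ‖[[h,A],A]‖`. -/
theorem stmt_12 {n : ℕ} (A h : Matrix (Fin n) (Fin n) ℂ) (hA : A.IsHermitian) :
    opNorm
        ((2 : ℂ)⁻¹ •
            (NormedSpace.exp (Complex.I • A) * h * NormedSpace.exp (-(Complex.I • A)) +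
              NormedSpace.exp (-(Complex.I • A)) * h * NormedSpace.exp (Complex.I • A)) -
          h) ≤
      (1 / 2) * opNorm ((h * A - A * h) * A - A * (h * A - A * h)) :=
  stmt_12_aux A h hA
end
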